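/- arXiv:1406.6809 — 16 statements merged into one kernel-verified Lean document; each statement's English description precedes it below -/
import Mathlib

section
/- Let n be a nonsquare positive integer, and let k, k', m be positive integers with k² < n and m² − n = ε·k·k' where ε = 1 or ε = −1. Then the following three conditions are equivalent: (1) m is best mod k; (2) 4k'² + k² ≤ 4n; (3) 2m ≥ 2k' + εk. -/
/-- `m` is a best representative of its congruence class mod `k`:
`|m² − n|` is minimal among positive `m'` congruent to `m` mod `k`. -/
def IsBest (n k m : ℤ) : Prop :=
  ∀ m' : ℤ, 0 < m' → m' ≡ m [ZMOD k] → |m ^ 2 - n| ≤ |m' ^ 2 - n|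

theorem stmt_0 (n k k' m ε : ℤ) (hn : 0 < n) (hns : ¬ IsSquare n)
    (hk : 0 < k) (hk' : 0 < k') (hm : 0 < m) (hkn : k ^ 2 < n)
    (hε : ε = 1 ∨ ε = -1) (heq : m ^ 2 - n = ε * (k * k')) :
    (IsBest n k m ↔ 4 * k' ^ 2 + k ^ 2 ≤ 4 * n) ∧
    (IsBest n k m ↔ 2 * m ≥ 2 * k' + ε * k) := by
  have hkk' : 0 < k * k' := mul_pos hk hk'
  have habs : |m ^ 2 - n| = k * k' := by
    rcases hε with h | h <;> subst h
    · rw [heq]; simpa using abs_of_pos hkk'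
    · rw [heq]; simp [abs_of_pos hkk']
  have h23 : (4 * k' ^ 2 + k ^ 2 ≤ 4 * n) ↔ (2 * m ≥ 2 * k' + ε * k) := by
    constructor
    · intro h2
      rcases le_or_gt (2 * k' + ε * k) 0 with h | h
      · linarith
      · by_contra hc
        push_neg at hc
        rcases hε with he | he <;> subst he <;> nlinarith
    · intro h3
      rcases le_or_gt (2 * k' + ε * k) 0 with h | h
      · rcases hε with he | he <;> subst he <;> nlinarith
      · have hp : 0 ≤ (2 * m - (2 * k' + ε * k)) * (2 * m + (2 * k' + ε * k)) :=
          mul_nonneg (by linarith) (by linarith)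
        rcases hε with he | he <;> subst he <;> nlinarith
  have hbest3 : IsBest n k m ↔ 2 * m ≥ 2 * k' + ε * k := by
    constructor
    · intro hIB
      by_contra hc
      push_neg at hc
      rcases hε with he | he <;> subst he
      · -- ε = 1 : consider m' = m - k
        have hmk : k < m := by nlinarith
        have hcong : m - k ≡ m [ZMOD k] := Int.modEq_iff_dvd.mpr ⟨1, by ring⟩
        have := hIB (m - k) (by linarith) hcong
        rw [habs] at this
        have hlt : |(m - k) ^ 2 - n| < k * k' := by
          rw [abs_lt]
          constructor <;> nlinarith
        linarith
      · -- ε = -1 : consider m' = m + k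
        have hcong : m + k ≡ m [ZMOD k] := Int.modEq_iff_dvd.mpr ⟨-1, by ring⟩
        have := hIB (m + k) (by linarith) hcong
        rw [habs] at this
        have hlt : |(m + k) ^ 2 - n| < k * k' := by
          rw [abs_lt]
          constructor <;> nlinarith
        linarith
    · intro h3 m' hm' hcong
      rw [habs]
      have hd : k ∣ m - m' := hcong.dvd
      rcases hε with he | he <;> subst he
      · rcases le_or_gt m m' with h | h
        · have : k * k' ≤ m' ^ 2 - n := by nlinarith
          exact this.trans (le_abs_self _)
        · have hkle : k ≤ m - m' := Int.le_of_dvd (by linarith) hd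
          have hmul : m' * m' ≤ (m - k) * (m - k) :=
            mul_le_mul (by linarith) (by linarith) hm'.le (by linarith)
          have : k * k' ≤ -(m' ^ 2 - n) := by nlinarith
          exact this.trans (neg_le_abs _)
      · rcases le_or_gt m' m with h | h
        · have hmul : m' * m' ≤ m * m :=
            mul_le_mul h h hm'.le hm.le
          have : k * k' ≤ -(m' ^ 2 - n) := by nlinarith
          exact this.trans (neg_le_abs _)
        · have hkle : k ≤ m' - m := Int.le_of_dvd (by linarith) (dvd_sub_comm.mp hd)
          have hmul : (m + k) * (m + k) ≤ m' * m' :=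
            mul_le_mul (by linarith) (by linarith) (by linarith) (by linarith)
          have : k * k' ≤ m' ^ 2 - n := by nlinarith
          exact this.trans (le_abs_self _)
  exact ⟨hbest3.trans h23.symm, hbest3⟩
end

section
/- Let n be a nonsquare positive integer, and let k, k', m be positive integers with k² < n and m² − n = ε·k·k' where ε = 1 or ε = −1. Then the following three conditions are equivalent: (1) m is strictly best mod k; (2) 4k'² + k² < 4n; (3) 2m > 2k' + εk. -/
/-- `m` is a strictly best representative of its congruence class mod `k`:
`|m² − n| < |m'² − n|` for every positive `m' ≠ m` congruent to `m` mod `k`. -/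
def IsStrictBest (n k m : ℤ) : Prop :=
  ∀ m' : ℤ, 0 < m' → m' ≡ m [ZMOD k] → m' ≠ m → |m ^ 2 - n| < |m' ^ 2 - n|

private lemma aux_best (n k k' m ε : ℤ)
    (hk : 0 < k) (hk' : 0 < k') (hm : 0 < m) (hkn : k ^ 2 < n)
    (hε : ε = 1 ∨ ε = -1) (heq : m ^ 2 - n = ε * (k * k'))
    (h3 : 2 * k' + ε * k < 2 * m) : IsStrictBest n k m := by
  intro m' hm'pos hcong hne
  obtain ⟨c, hc⟩ := Int.modEq_iff_dvd.mp hcong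
  -- hc : m - m' = k * c
  have hm'e : m' = m - k * c := by linarith
  subst hm'e
  have hc0 : c ≠ 0 := by
    intro h; apply hne; rw [h]; ring
  have habs : |m ^ 2 - n| = k * k' := by
    rcases hε with rfl | rfl
    · rw [heq]; simpa using (abs_of_pos (mul_pos hk hk'))
    · rw [heq]
      rw [show (-1 : ℤ) * (k * k') = -(k * k') by ring, abs_neg]
      exact abs_of_pos (mul_pos hk hk')
  rw [habs]
  have hveq : (m - k * c) ^ 2 - n = k * (ε * k' - 2 * c * m + c ^ 2 * k) := by
    linear_combination heq
  rw [hveq, abs_mul, abs_of_pos hk]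
  have : k' < |ε * k' - 2 * c * m + c ^ 2 * k| := by
    rcases lt_or_gt_of_ne hc0 with hcneg | hcpos
    · -- c ≤ -1 : m' = m - k*c > m
      have hc1 : c ≤ -1 := by omega
      have hsq : (0 : ℤ) ≤ c ^ 2 - 1 := by nlinarith
      have hv : k' < ε * k' - 2 * c * m + c ^ 2 * k := by
        rcases hε with rfl | rfl
        · nlinarith [mul_nonneg (show (0:ℤ) ≤ -c - 1 by omega) hm.le,
            mul_nonneg hsq hk.le]
        · nlinarith [mul_nonneg (show (0:ℤ) ≤ -c - 1 by omega) hm.le,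
            mul_nonneg hsq hk.le]
      exact lt_of_lt_of_le hv (le_abs_self _)
    · -- c ≥ 1 : m' = m - k*c < m, and 0 < m - k*c
      have hc1 : 1 ≤ c := hcpos
      have hmkc : k * c < m := by linarith
      have hv : ε * k' - 2 * c * m + c ^ 2 * k < -k' := by
        rcases hε with rfl | rfl
        · -- need m > k
          have hmk : k < m := by nlinarith
          nlinarith [mul_nonneg (show (0:ℤ) ≤ c - 1 by omega)
            (show (0:ℤ) ≤ (m - k * c) + (m - k) by linarith)]
        · nlinarith [mul_pos hcpos (show (0:ℤ) < 2 * m - c * k by linarith)]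
      calc k' < -(ε * k' - 2 * c * m + c ^ 2 * k) := by linarith
        _ ≤ |ε * k' - 2 * c * m + c ^ 2 * k| := neg_le_abs _
  exact (mul_lt_mul_iff_right₀ hk).mpr this

private lemma aux_not (n k k' m ε : ℤ)
    (hk : 0 < k) (hk' : 0 < k') (hm : 0 < m) (hkn : k ^ 2 < n)
    (hε : ε = 1 ∨ ε = -1) (heq : m ^ 2 - n = ε * (k * k'))
    (h3 : 2 * k' + ε * k ≥ 2 * m) : ¬ IsStrictBest n k m := by
  intro hSB
  rcases hε with rfl | rfl
  · have hmk : k < m := by nlinarith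
    have hcong : (m - k) ≡ m [ZMOD k] := Int.modEq_iff_dvd.mpr ⟨1, by ring⟩
    have h := hSB (m - k) (by linarith) hcong (by intro h; simp at h; omega)
    have h1 : m ^ 2 - n = k * k' := by linarith [heq]
    have h2 : (m - k) ^ 2 - n = k * (k' + k - 2 * m) := by linear_combination heq
    rw [h1, h2, abs_mul, abs_mul, abs_of_pos hk, abs_of_pos hk'] at h
    have hub : |k' + k - 2 * m| ≤ k' := abs_le.mpr ⟨by linarith, by linarith⟩
    nlinarith [(mul_lt_mul_iff_right₀ hk).mp h]
  · have hcong : (m + k) ≡ m [ZMOD k] := Int.modEq_iff_dvd.mpr ⟨-1, by ring⟩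
    have h := hSB (m + k) (by linarith) hcong (by intro h; simp at h; omega)
    have h1 : |m ^ 2 - n| = k * k' := by
      rw [heq, show (-1 : ℤ) * (k * k') = -(k * k') by ring, abs_neg]
      exact abs_of_pos (mul_pos hk hk')
    have h2 : (m + k) ^ 2 - n = k * (2 * m + k - k') := by linear_combination heq
    rw [h1, h2, abs_mul, abs_of_pos hk] at h
    have hub : |2 * m + k - k'| ≤ k' := abs_le.mpr ⟨by linarith, by linarith⟩
    nlinarith [(mul_lt_mul_iff_right₀ hk).mp h]

private lemma aux_iff23 (n k k' m ε : ℤ)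
    (hk : 0 < k) (hk' : 0 < k') (hm : 0 < m) (hkn : k ^ 2 < n)
    (hε : ε = 1 ∨ ε = -1) (heq : m ^ 2 - n = ε * (k * k')) :
    4 * k' ^ 2 + k ^ 2 < 4 * n ↔ 2 * k' + ε * k < 2 * m := by
  have hlow : -(2 * m) < 2 * k' + ε * k := by
    rcases hε with rfl | rfl
    · nlinarith
    · -- need k < 2*m + 2*k', using k^2 < n = m^2 + k*k'
      by_contra h
      push_neg at h
      nlinarith [mul_pos hk hk', mul_pos hm hk]
  constructor
  · intro h2
    by_contra h
    push_neg at h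
    have hpos : 0 < 2 * k' + ε * k := by linarith
    have he2 : ε ^ 2 = 1 := by rcases hε with rfl | rfl <;> norm_num
    nlinarith [mul_le_mul h h (by linarith : (0:ℤ) ≤ 2 * m) hpos.le, he2]
  · intro h3
    have hprod : 0 < (2 * m - (2 * k' + ε * k)) * (2 * m + (2 * k' + ε * k)) :=
      mul_pos (by linarith) (by linarith)
    have he2 : ε ^ 2 = 1 := by rcases hε with rfl | rfl <;> norm_num
    nlinarith [hprod, he2, heq]

theorem stmt_1 (n k k' m ε : ℤ) (hn : 0 < n) (hns : ¬ IsSquare n)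
    (hk : 0 < k) (hk' : 0 < k') (hm : 0 < m) (hkn : k ^ 2 < n)
    (hε : ε = 1 ∨ ε = -1) (heq : m ^ 2 - n = ε * (k * k')) :
    (IsStrictBest n k m ↔ 4 * k' ^ 2 + k ^ 2 < 4 * n) ∧
    (IsStrictBest n k m ↔ 2 * m > 2 * k' + ε * k) := by
  have hiff3 : IsStrictBest n k m ↔ 2 * k' + ε * k < 2 * m := by
    constructor
    · intro hSB
      by_contra h
      push_neg at h
      exact aux_not n k k' m ε hk hk' hm hkn hε heq h hSB
    · exact aux_best n k k' m ε hk hk' hm hkn hε heq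
  have hiff2 := aux_iff23 n k k' m ε hk hk' hm hkn hε heq
  exact ⟨hiff3.trans hiff2.symm, hiff3⟩
end

section
/- Let n be a nonsquare positive integer and let (k, m, k') be a step, i.e. k, m, k' are positive integers with k² < n, |m² − n| = k·k', and m best mod k. Then k'² < n. -/
/-- `(k, m, k')` is a step. -/
def IsStep (n k m k' : ℤ) : Prop :=
  0 < k ∧ 0 < m ∧ 0 < k' ∧ k ^ 2 < n ∧ |m ^ 2 - n| = k * k' ∧ IsBest n k m

theorem stmt_2 (n k m k' : ℤ) (hn : 0 < n) (hns : ¬ IsSquare n)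
    (hstep : IsStep n k m k') :
    k' ^ 2 < n := by
  obtain ⟨hk, hm, hk', hkn, habs, hbest⟩ := hstep
  have hne : m ^ 2 ≠ n := fun h => hns ⟨m, by rw [← h]; ring⟩
  by_contra hcon
  push_neg at hcon
  rcases lt_or_gt_of_ne hne with hlt | hgt
  · -- m² < n, compare with m + k
    have h1 : n - m ^ 2 = k * k' := by
      rw [← habs, abs_of_neg (by linarith)]; ring
    have hmk : 0 < m + k := by linarith
    have hcong : m + k ≡ m [ZMOD k] := by
      simpa [Int.ModEq] using Int.add_mul_emod_self_left (a := m) (b := k) (c := 1)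
    have h2 := hbest (m + k) hmk hcong
    have h3 : (m + k) ^ 2 - n > 0 := by
      by_contra h
      push_neg at h
      rw [abs_of_neg (by linarith), abs_of_nonpos (by linarith)] at h2
      nlinarith
    rw [abs_of_neg (by linarith), abs_of_pos h3] at h2
    -- h2 : -(m²-n) ≤ (m+k)²-n, so 2kk' ≤ 2mk + k², so 2k' ≤ 2m + k
    have h4 : 2 * k' ≤ 2 * m + k := by nlinarith
    nlinarith [sq_nonneg (2 * k' - k - 2 * m), sq_nonneg k]
  · -- m² > n, compare with m - k
    have h1 : m ^ 2 - n = k * k' := by rw [← habs, abs_of_pos (by linarith)]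
    have hmk : 0 < m - k := by nlinarith
    have hcong : m - k ≡ m [ZMOD k] := by
      simpa [Int.ModEq] using Int.sub_emod_right m k
    have h2 := hbest (m - k) hmk hcong
    have h3 : (m - k) ^ 2 - n < 0 := by
      by_contra h
      push_neg at h
      rw [abs_of_pos (by linarith), abs_of_nonneg (by linarith)] at h2
      nlinarith
    rw [abs_of_pos (by linarith), abs_of_neg h3] at h2
    have h4 : 2 * k' + k ≤ 2 * m := by nlinarith
    nlinarith [sq_nonneg (2 * k' + k - 2 * m), sq_nonneg k]
end

section
/- Let n be a nonsquare positive integer and let (k, m, k') be a step with k' ≥ k. Then the step is reduced, i.e. m is also best mod k'. -/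
theorem stmt_3 (n k m k' : ℤ) (hn : 0 < n) (hns : ¬ IsSquare n)
    (hstep : IsStep n k m k') (hkk' : k ≤ k') :
    IsBest n k' m := by
  obtain ⟨hk, hm, hk', hk2, habs, hbest⟩ := hstep
  have hkk'pos : 0 ≤ k * k' := by positivity
  have habs' := (abs_eq hkk'pos).mp habs
  have hEge : -(k * k') ≤ m ^ 2 - n := by
    rw [← habs]; exact neg_abs_le _
  -- key bounds on m
  have key : 2 * m ≥ 2 * k' - k ∧ (m ^ 2 - n = k * k' → 2 * m ≥ 2 * k' + k) := by
    rcases habs' with hE | hE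
    · have hmk : k < m := by nlinarith
      have hb := hbest (m - k) (by linarith) (Int.modEq_iff_dvd.mpr ⟨1, by ring⟩)
      rw [habs] at hb
      rcases abs_cases ((m - k) ^ 2 - n) with ⟨h1, _⟩ | ⟨h1, _⟩ <;> rw [h1] at hb
      · constructor
        · nlinarith [mul_pos hk (show (0:ℤ) < 2 * m - k by linarith)]
        · intro _; nlinarith [mul_pos hk (show (0:ℤ) < 2 * m - k by linarith)]
      · constructor
        · nlinarith
        · intro _; nlinarith
    · have hb := hbest (m + k) (by linarith) (Int.modEq_iff_dvd.mpr ⟨-1, by ring⟩)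
      rw [habs] at hb
      rcases abs_cases ((m + k) ^ 2 - n) with ⟨h1, _⟩ | ⟨h1, _⟩ <;> rw [h1] at hb
      · constructor
        · nlinarith
        · intro h; nlinarith
      · constructor
        · nlinarith [mul_pos hk (show (0:ℤ) < 2 * m + k by linarith)]
        · intro h; nlinarith
  obtain ⟨H1, H2⟩ := key
  intro m' hm' hmod
  rw [habs]
  obtain ⟨t, ht⟩ := hmod.dvd
  have hm'eq : m' = m - k' * t := by linarith
  subst hm'eq
  rcases lt_trichotomy t 0 with htn | ht0 | htp
  · -- m' = m + k' * |t|, larger side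
    have hs : t ≤ -1 := by linarith
    rw [le_abs]; left
    nlinarith [mul_nonneg (show (0:ℤ) ≤ -t - 1 by linarith)
        (show (0:ℤ) ≤ k' * (2 * m - k' * t) by nlinarith),
      sq_nonneg (k' * (t + 1)), mul_pos hk' hm]
  · subst ht0; simp [habs]
  · have hs : 1 ≤ t := htp
    have hmge : k' * t + 1 ≤ m := by linarith
    rcases habs' with hE | hE
    · rw [le_abs]; right
      rcases eq_or_lt_of_le hs with h1 | h2
      · have h1' : t = 1 := h1.symm
        subst h1'
        nlinarith [H2 hE]
      · have h2' : 2 ≤ t := h2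
        nlinarith [H2 hE,
          mul_nonneg (show (0:ℤ) ≤ t by linarith) (show (0:ℤ) ≤ m - k' * t - 1 by linarith),
          mul_nonneg (show (0:ℤ) ≤ t - 2 by linarith) (show (0:ℤ) ≤ m + 1 by linarith)]
    · rw [le_abs]; right
      nlinarith [mul_pos hk' (show (0:ℤ) < t * (2 * m - k' * t) by nlinarith)]
end

section
/- Let n be a nonsquare positive integer and let k, k', k'', m, m' be positive integers such that k² < n, k·k' = |m² − n|, k'·k'' = |m'² − n|, and k' divides m + m'. If 4k'² + k² ≤ 4n and 4k''² + k'² ≤ 4n, then 4k'² + k''² ≤ 4n. -/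
set_option maxHeartbeats 1600000 in
theorem stmt_4 (n k k' k'' m m' : ℤ) (hn : 0 < n) (hns : ¬ IsSquare n)
    (hk : 0 < k) (hk' : 0 < k') (hk'' : 0 < k'') (hm : 0 < m) (hm' : 0 < m')
    (hkn : k ^ 2 < n)
    (heq1 : k * k' = |m ^ 2 - n|) (heq2 : k' * k'' = |m' ^ 2 - n|)
    (hdvd : k' ∣ m + m')
    (h1 : 4 * k' ^ 2 + k ^ 2 ≤ 4 * n) (h2 : 4 * k'' ^ 2 + k' ^ 2 ≤ 4 * n) :
    4 * k' ^ 2 + k'' ^ 2 ≤ 4 * n := by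
  by_contra hcon
  push_neg at hcon
  obtain ⟨t, ht⟩ := hdvd
  have hA : k < k'' := by
    have h : k ^ 2 < k'' ^ 2 := by linarith
    exact lt_of_pow_lt_pow_left₀ 2 hk''.le h
  have hB : k'' < k' := by
    have h : k'' ^ 2 < k' ^ 2 := by linarith
    exact lt_of_pow_lt_pow_left₀ 2 hk'.le h
  have b1 : m ^ 2 - n ≤ k * k' := heq1 ▸ le_abs_self _
  have b2 : m' ^ 2 - n ≤ k' * k'' := heq2 ▸ le_abs_self _
  have hm3 : 2 * m < 3 * k' := by nlinarith [sq_nonneg (2 * m - 3 * k')]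
  have hm'3 : 2 * m' < 3 * k' := by nlinarith [sq_nonneg (2 * m' - 3 * k')]
  have ht1 : 1 ≤ t := by
    by_contra h
    push_neg at h
    have : k' * t ≤ 0 := mul_nonpos_of_nonneg_of_nonpos hk'.le (by linarith)
    linarith
  have ht2 : t ≤ 2 := by
    have h3 : k' * t < k' * 3 := by linarith
    have := lt_of_mul_lt_mul_left h3 hk'.le
    linarith
  have hm'e : m' = k' * t - m := by linarith
  subst hm'e
  rcases abs_cases (m ^ 2 - n) with ⟨e1, s1⟩ | ⟨e1, s1⟩ <;>
      rcases abs_cases ((k' * t - m) ^ 2 - n) with ⟨e2, s2⟩ | ⟨e2, s2⟩ <;>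
    rw [e1] at heq1 <;> rw [e2] at heq2 <;> interval_cases t
  -- case (P,P,1)
  · nlinarith [mul_pos (show (0:ℤ) < k' - m by linarith) (show (0:ℤ) < k' + m by linarith),
      mul_pos hk hk']
  -- case (P,P,2)
  · have hq : k' * (4 * k' - 4 * m + k) = k' * k'' := by linear_combination heq1 - heq2
    have hq' : 4 * k' - 4 * m + k = k'' := mul_left_cancel₀ hk'.ne' hq
    nlinarith [mul_pos (show (0:ℤ) < k' - m by linarith) (show (0:ℤ) < k' + m by linarith),
      mul_pos hk hk']
  -- case (P,N,1)
  · nlinarith [mul_pos (show (0:ℤ) < k' - m by linarith) (show (0:ℤ) < k' + m by linarith),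
      mul_pos hk hk']
  -- case (P,N,2)
  · have hq : k' * (4 * k' - 4 * m + k) = k' * (-k'') := by linear_combination heq1 + heq2
    have hq' : 4 * k' - 4 * m + k = -k'' := mul_left_cancel₀ hk'.ne' hq
    have key : (4 * k' + k + k'') ^ 2 = 16 * n + 16 * (k * k') := by
      linear_combination (4 * m + 4 * k' + k + k'') * hq' - 16 * heq1
    nlinarith [key, mul_pos (show (0:ℤ) < k'' - k by linarith)
      (show (0:ℤ) < 8 * k' - 3 * k'' - k by linarith)]
  -- case (N,P,1)
  · nlinarith [mul_pos (show (0:ℤ) < k' - (k' * 1 - m) by linarith)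
      (show (0:ℤ) < k' + (k' * 1 - m) by linarith), mul_pos hk' hk'']
  -- case (N,P,2)
  · have hq : k' * (4 * k' - 4 * m - k) = k' * k'' := by linear_combination -heq1 - heq2
    have hq' : 4 * k' - 4 * m - k = k'' := mul_left_cancel₀ hk'.ne' hq
    have key : (4 * k' - k - k'') ^ 2 = 16 * n - 16 * (k * k') := by
      linear_combination (4 * m + 4 * k' - k - k'') * hq' + 16 * heq1
    nlinarith [key, mul_pos (show (0:ℤ) < k'' - k by linarith)
      (show (0:ℤ) < 8 * k' - 3 * k - k'' by linarith)]
  -- case (N,N,1)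
  · have hq : k' * (k' - 2 * m - k) = k' * (-k'') := by linear_combination -heq1 + heq2
    have hq' : k' - 2 * m - k = -k'' := mul_left_cancel₀ hk'.ne' hq
    have key : (k' + k'' - k) ^ 2 = 4 * n - 4 * (k * k') := by
      linear_combination (2 * m + k' + k'' - k) * hq' + 4 * heq1
    nlinarith [key, mul_pos (show (0:ℤ) < k' - k'' by linarith) hk'',
      sq_nonneg (k' - k''), mul_pos (show (0:ℤ) < k' - k'' by linarith)
        (show (0:ℤ) < k'' - k by linarith)]
  -- case (N,N,2)
  · have hq : k' * (4 * k' - 4 * m - k) = k' * (-k'') := by linear_combination -heq1 + heq2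
    have hq' : 4 * k' - 4 * m - k = -k'' := mul_left_cancel₀ hk'.ne' hq
    have key : (4 * k' + k'' - k) ^ 2 = 16 * n - 16 * (k * k') := by
      linear_combination (4 * m + 4 * k' + k'' - k) * hq' + 16 * heq1
    nlinarith [key, mul_pos (show (0:ℤ) < k'' + k by linarith)
      (show (0:ℤ) < 8 * k' - 3 * k'' + k by linarith)]
end

section
/- Let n be a nonsquare positive integer and let k, k', k'', m, m' be positive integers such that k² < n, k·k' = |m² − n|, k'·k'' = |m'² − n|, k' divides m + m', 4k'² + k² ≤ 4n, 4k''² + k'² ≤ 4n, and moreover k < k'' < k'. Then the positive integer l = (m + m')/k' satisfies l ≥ 2; and if furthermore m'² > n, then l ≥ 3. -/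
set_option maxHeartbeats 1000000

private lemma le_of_sq_le_sq' (a b : ℤ) (hb : 0 < b) (h : a ^ 2 ≤ b ^ 2) : a ≤ b := by
  nlinarith

theorem stmt_5 (n k k' k'' m m' l : ℤ) (hn : 0 < n) (hns : ¬ IsSquare n)
    (hk : 0 < k) (hk' : 0 < k') (hk'' : 0 < k'') (hm : 0 < m) (hm' : 0 < m')
    (hkn : k ^ 2 < n)
    (heq1 : k * k' = |m ^ 2 - n|) (heq2 : k' * k'' = |m' ^ 2 - n|)
    (h1 : 4 * k' ^ 2 + k ^ 2 ≤ 4 * n) (h2 : 4 * k'' ^ 2 + k' ^ 2 ≤ 4 * n)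
    (hlt1 : k < k'') (hlt2 : k'' < k')
    (hl : m + m' = k' * l) :
    2 ≤ l ∧ (n < m' ^ 2 → 3 ≤ l) := by
  have hlpos : 0 < l := by nlinarith
  have hk'2 : k' ^ 2 < n := by nlinarith
  -- l ≠ 1
  have hne1 : l ≠ 1 := by
    intro h1l
    rw [h1l, mul_one] at hl
    have hmk : m < k' := by linarith
    have hm'k : m' < k' := by linarith
    have hm2 : m ^ 2 < n := by nlinarith
    have hm'2 : m' ^ 2 < n := by nlinarith
    have heq1' : k * k' = n - m ^ 2 := by
      rw [heq1, abs_of_neg (by linarith)]; ring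
    have heq2' : k' * k'' = n - m' ^ 2 := by
      rw [heq2, abs_of_neg (by linarith)]; ring
    have e : k' * (k - k'') = k' * (m' - m) := by
      linear_combination heq1' - heq2' + (m' - m) * hl
    have hd : k - k'' = m' - m := mul_left_cancel₀ (ne_of_gt hk') e
    have hsq : (2 * k' - k) ^ 2 ≤ (2 * m) ^ 2 := by nlinarith
    have hE : 2 * k' - k ≤ 2 * m := le_of_sq_le_sq' _ _ (by linarith) hsq
    linarith
  -- l ≠ 2 when n < m'^2
  have hne2 : n < m' ^ 2 → l ≠ 2 := by
    intro hnm' h2l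
    rw [h2l] at hl
    have hm'k : k' < m' := by nlinarith
    have hmk : m < k' := by linarith
    have hm2 : m ^ 2 < n := by nlinarith
    have heq1' : k * k' = n - m ^ 2 := by
      rw [heq1, abs_of_neg (by linarith)]; ring
    have heq2' : k' * k'' = m' ^ 2 - n := by
      rw [heq2, abs_of_pos (by linarith)]
    have e : k' * (k + k'') = k' * (2 * (m' - m)) := by
      linear_combination heq1' + heq2' + (m' - m) * hl
    have hd : k + k'' = 2 * (m' - m) := mul_left_cancel₀ (ne_of_gt hk') e
    have hsq : (2 * k' - k) ^ 2 ≤ (2 * m) ^ 2 := by nlinarith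
    have hE : 2 * k' - k ≤ 2 * m := le_of_sq_le_sq' _ _ (by linarith) hsq
    linarith
  constructor
  · omega
  · intro h
    have := hne2 h
    omega
end

section
/- Let n be a nonsquare positive integer and let k, k', k'', m, m' be positive integers such that k² < n, k·k' = |m² − n|, k'·k'' = |m'² − n|, k' divides m + m', 4k'² + k² ≤ 4n, 4k''² + k'² ≤ 4n, and moreover k < k'' < k'. Then: if m'² < n one has 2m' > 2k' − k'', and if m'² > n one has 2m' > 2k' + k''. -/
set_option maxHeartbeats 1000000 in
theorem stmt_6 (n k k' k'' m m' : ℤ) (hn : 0 < n) (hns : ¬ IsSquare n)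
    (hk : 0 < k) (hk' : 0 < k') (hk'' : 0 < k'') (hm : 0 < m) (hm' : 0 < m')
    (hkn : k ^ 2 < n)
    (heq1 : k * k' = |m ^ 2 - n|) (heq2 : k' * k'' = |m' ^ 2 - n|)
    (hdvd : k' ∣ m + m')
    (h1 : 4 * k' ^ 2 + k ^ 2 ≤ 4 * n) (h2 : 4 * k'' ^ 2 + k' ^ 2 ≤ 4 * n)
    (hlt1 : k < k'') (hlt2 : k'' < k') :
    (m' ^ 2 < n → 2 * m' > 2 * k' - k'') ∧ (n < m' ^ 2 → 2 * m' > 2 * k' + k'') := by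
  have hm2 : m ^ 2 ≠ n := fun h => hns ⟨m, by rw [← h]; ring⟩
  have hm'2 : m' ^ 2 ≠ n := fun h => hns ⟨m', by rw [← h]; ring⟩
  obtain ⟨t, ht⟩ := hdvd
  have ht1 : 1 ≤ t := by
    by_contra h
    push_neg at h
    nlinarith [mul_nonpos_of_nonneg_of_nonpos hk'.le (by linarith : t ≤ 0)]
  constructor
  · intro hlt
    rw [abs_of_neg (by linarith : m' ^ 2 - n < 0)] at heq2
    rcases lt_or_gt_of_ne hm2 with hc | hc
    · -- m² < n
      rw [abs_of_neg (by linarith : m ^ 2 - n < 0)] at heq1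
      have key : t * (m - m') = k'' - k := by
        have h3 : k' * (t * (m - m')) = k' * (k'' - k) := by
          linear_combination -(m - m') * ht + heq1 - heq2
        exact mul_left_cancel₀ hk'.ne' h3
      have hd : 1 ≤ m - m' := by
        by_contra h
        push_neg at h
        nlinarith [mul_nonpos_of_nonneg_of_nonpos (by linarith : (0:ℤ) ≤ t)
          (by linarith : m - m' ≤ 0)]
      have hB : 2 * k' - k ≤ 2 * m := by
        by_contra h
        push_neg at h
        nlinarith [mul_pos (by linarith : (0:ℤ) < 2 * k' - k - 2 * m)
          (by linarith : (0:ℤ) < 2 * k' - k + 2 * m)]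
      rcases eq_or_lt_of_le ht1 with h | h
      · rw [← h] at key ht
        linarith
      · have hp1 : k' * 2 ≤ k' * t := mul_le_mul_of_nonneg_left (by linarith) hk'.le
        have hp2 : 2 * (m - m') ≤ t * (m - m') :=
          mul_le_mul_of_nonneg_right (by linarith) (by linarith)
        linarith
    · -- m² > n
      rw [abs_of_pos (by linarith : 0 < m ^ 2 - n)] at heq1
      have key : t * (m - m') = k + k'' := by
        have h3 : k' * (t * (m - m')) = k' * (k + k'') := by
          linear_combination -(m - m') * ht - heq1 - heq2
        exact mul_left_cancel₀ hk'.ne' h3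
      have hd : 1 ≤ m - m' := by
        by_contra h
        push_neg at h
        nlinarith [mul_nonpos_of_nonneg_of_nonpos (by linarith : (0:ℤ) ≤ t)
          (by linarith : m - m' ≤ 0)]
      have hB : 2 * k' + k ≤ 2 * m := by
        by_contra h
        push_neg at h
        nlinarith [mul_pos (by linarith : (0:ℤ) < 2 * k' + k - 2 * m)
          (by linarith : (0:ℤ) < 2 * k' + k + 2 * m)]
      rcases eq_or_lt_of_le ht1 with h | h
      · rw [← h] at key ht
        linarith
      · have hp1 : k' * 2 ≤ k' * t := mul_le_mul_of_nonneg_left (by linarith) hk'.le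
        have hp2 : 2 * (m - m') ≤ t * (m - m') :=
          mul_le_mul_of_nonneg_right (by linarith) (by linarith)
        linarith
  · intro hlt
    rw [abs_of_pos (by linarith : 0 < m' ^ 2 - n)] at heq2
    rcases lt_or_gt_of_ne hm2 with hc | hc
    · -- m² < n
      rw [abs_of_neg (by linarith : m ^ 2 - n < 0)] at heq1
      have key : t * (m' - m) = k + k'' := by
        have h3 : k' * (t * (m' - m)) = k' * (k + k'') := by
          linear_combination -(m' - m) * ht - heq1 - heq2
        exact mul_left_cancel₀ hk'.ne' h3
      have hd : 1 ≤ m' - m := by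
        by_contra h
        push_neg at h
        nlinarith [mul_nonpos_of_nonneg_of_nonpos (by linarith : (0:ℤ) ≤ t)
          (by linarith : m' - m ≤ 0)]
      have hB : 2 * k' - k ≤ 2 * m := by
        by_contra h
        push_neg at h
        nlinarith [mul_pos (by linarith : (0:ℤ) < 2 * k' - k - 2 * m)
          (by linarith : (0:ℤ) < 2 * k' - k + 2 * m)]
      rcases eq_or_lt_of_le ht1 with h | h
      · rw [← h] at key ht
        linarith
      · have ht2 : 2 ≤ t := h
        rcases eq_or_lt_of_le ht2 with h2' | h2'
        · rw [← h2'] at key ht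
          linarith
        · have hp1 : k' * 3 ≤ k' * t := mul_le_mul_of_nonneg_left (by linarith) hk'.le
          linarith
    · -- m² > n
      rw [abs_of_pos (by linarith : 0 < m ^ 2 - n)] at heq1
      have key : t * (m' - m) = k'' - k := by
        have h3 : k' * (t * (m' - m)) = k' * (k'' - k) := by
          linear_combination -(m' - m) * ht + heq1 - heq2
        exact mul_left_cancel₀ hk'.ne' h3
      have hd : 1 ≤ m' - m := by
        by_contra h
        push_neg at h
        nlinarith [mul_nonpos_of_nonneg_of_nonpos (by linarith : (0:ℤ) ≤ t)
          (by linarith : m' - m ≤ 0)]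
      have hB : 2 * k' + k ≤ 2 * m := by
        by_contra h
        push_neg at h
        nlinarith [mul_pos (by linarith : (0:ℤ) < 2 * k' + k - 2 * m)
          (by linarith : (0:ℤ) < 2 * k' + k + 2 * m)]
      rcases eq_or_lt_of_le ht1 with h | h
      · rw [← h] at key ht
        linarith
      · have ht2 : 2 ≤ t := h
        rcases eq_or_lt_of_le ht2 with h2' | h2'
        · rw [← h2'] at key ht
          linarith
        · have hp1 : k' * 3 ≤ k' * t := mul_le_mul_of_nonneg_left (by linarith) hk'.le
          linarith
end

section
/- Let n be a nonsquare positive integer and let k, m be positive integers with k² < n and m² < n. If both m and m + k are best mod k, then k is even, 4n = (2m + k)² + k², and, setting k' = m + k/2, one has |m² − n| = |(m + k)² − n| = k·k'. -/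
theorem stmt_7 (n k m : ℤ) (hn : 0 < n) (hns : ¬ IsSquare n)
    (hk : 0 < k) (hm : 0 < m) (hkn : k ^ 2 < n) (hmn : m ^ 2 < n)
    (hbest : IsBest n k m) (hbest' : IsBest n k (m + k)) :
    ∃ t : ℤ, k = 2 * t ∧ 4 * n = (2 * m + k) ^ 2 + k ^ 2 ∧
      |m ^ 2 - n| = k * (m + t) ∧ |(m + k) ^ 2 - n| = k * (m + t) := by
  have h1 : |(m + k) ^ 2 - n| ≤ |m ^ 2 - n| :=
    hbest' m hm (by
      have h := Int.add_mul_emod_self_left (a := m) (b := k) (c := 1)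
      simp only [mul_one] at h
      exact h.symm)
  have h2 : |m ^ 2 - n| ≤ |(m + k) ^ 2 - n| :=
    hbest (m + k) (by linarith) (by
      have h := Int.add_mul_emod_self_left (a := m) (b := k) (c := 1)
      simp only [mul_one] at h
      exact h)
  have heq : |m ^ 2 - n| = |(m + k) ^ 2 - n| := le_antisymm h2 h1
  have habs1 : |m ^ 2 - n| = n - m ^ 2 := by
    rw [abs_of_nonpos (by linarith)]; ring
  have hne : (m + k) ^ 2 ≠ n := by
    intro h
    exact hns ⟨m + k, by rw [← h]; ring⟩
  have hgt : n < (m + k) ^ 2 := by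
    by_contra h
    push_neg at h
    have habs2 : |(m + k) ^ 2 - n| = n - (m + k) ^ 2 := by
      rw [abs_of_nonpos (by linarith)]; ring
    rw [habs1, habs2] at heq
    have : m ^ 2 = (m + k) ^ 2 := by linarith
    nlinarith
  have habs2 : |(m + k) ^ 2 - n| = (m + k) ^ 2 - n := abs_of_pos (by linarith)
  have h2n : 2 * n = m ^ 2 + (m + k) ^ 2 := by
    rw [habs1, habs2] at heq; linarith
  have hkeven : Even k := by
    have hsq : Even (k ^ 2) := ⟨n - m ^ 2 - m * k, by nlinarith⟩
    exact (Int.even_pow.mp hsq).1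
  obtain ⟨t, ht⟩ := hkeven
  refine ⟨t, by omega, by linear_combination 2 * h2n, ?_, ?_⟩
  · rw [habs1]; nlinarith
  · rw [habs2]; nlinarith
end

section
/- Let n be a nonsquare positive integer, let k be a positive even integer and k' a positive integer such that 4n = 4k'² + k² and k² < n. Then k' > k/2, both k' − k/2 and k' + k/2 are positive, both are best mod k, and |(k' − k/2)² − n| = |(k' + k/2)² − n| = k·k'; consequently both (k, k' − k/2, k') and (k, k' + k/2, k') are steps ('twin' steps). -/
theorem stmt_8 (n k k' t : ℤ) (hn : 0 < n) (hns : ¬ IsSquare n)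
    (hk : 0 < k) (hk' : 0 < k') (ht : k = 2 * t)
    (hsum : 4 * n = 4 * k' ^ 2 + k ^ 2) (hkn : k ^ 2 < n) :
    t < k' ∧ 0 < k' - t ∧ 0 < k' + t ∧
    IsBest n k (k' - t) ∧ IsBest n k (k' + t) ∧
    |(k' - t) ^ 2 - n| = k * k' ∧ |(k' + t) ^ 2 - n| = k * k' ∧
    IsStep n k (k' - t) k' ∧ IsStep n k (k' + t) k' := by
  subst ht
  have htpos : 0 < t := by linarith
  have hn' : n = k' ^ 2 + t ^ 2 := by nlinarith
  have h3 : 3 * t ^ 2 < k' ^ 2 := by nlinarith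
  have hlt : t < k' := by nlinarith
  have key : ∀ m' : ℤ, 0 < m' → m' ≡ k' + t [ZMOD 2 * t] →
      2 * t * k' ≤ |m' ^ 2 - n| := by
    intro m' hm' hcong
    obtain ⟨j, hj⟩ := hcong.symm.dvd
    have hm : m' = k' + t + 2 * t * j := by linarith
    subst hm
    have hE : (k' + t + 2 * t * j) ^ 2 - n
        = 2 * t * (k' * (1 + 2 * j) + 2 * t * j * (j + 1)) := by
      rw [hn']; ring
    rcases le_or_gt 0 j with hj0 | hj0
    · have h1 : 0 ≤ t * k' * j := mul_nonneg (mul_nonneg htpos.le hk'.le) hj0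
      have h2 : 0 ≤ t * t * (j * (j + 1)) :=
        mul_nonneg (mul_nonneg htpos.le htpos.le) (mul_nonneg hj0 (by linarith))
      rw [hE, abs_of_nonneg (by nlinarith)]
      nlinarith
    · rcases eq_or_lt_of_le (by omega : j ≤ -1) with hj1 | hj1
      · rw [hE, hj1, abs_of_nonpos (by nlinarith)]
        nlinarith
      · have hj2 : j ≤ -2 := by omega
        have hpos : 0 < k' + t * j := by nlinarith
        rw [hE, abs_of_nonpos (by nlinarith [mul_nonneg (by linarith : (0:ℤ) ≤ -(j+1)) hpos.le])]
        nlinarith [mul_pos (by linarith : (0:ℤ) < -(j+1)) hpos]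
  have hcong1 : (k' - t) ≡ k' + t [ZMOD 2 * t] := by
    have : (2 * t) ∣ (k' - t) - (k' + t) := ⟨-1, by ring⟩
    exact (Int.modEq_iff_dvd.mpr ⟨1, by ring⟩)
  have hcong2 : (k' + t) ≡ k' + t [ZMOD 2 * t] := Int.ModEq.refl _
  have habs1 : |(k' - t) ^ 2 - n| = 2 * t * k' := by
    rw [hn', abs_of_nonpos (by nlinarith)]; ring
  have habs2 : |(k' + t) ^ 2 - n| = 2 * t * k' := by
    rw [hn', abs_of_nonneg (by nlinarith)]; ring
  have hbest1 : IsBest n (2 * t) (k' - t) := by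
    intro m' hm' hc
    rw [habs1]
    exact key m' hm' (hc.trans hcong1)
  have hbest2 : IsBest n (2 * t) (k' + t) := by
    intro m' hm' hc
    rw [habs2]
    exact key m' hm' hc
  refine ⟨hlt, by linarith, by linarith, hbest1, hbest2, by rw [habs1], by rw [habs2],
    ⟨hk, by linarith, hk', hkn, by rw [habs1], hbest1⟩,
    ⟨hk, by linarith, hk', hkn, by rw [habs2], hbest2⟩⟩
end

section
/- Let n be a nonsquare positive integer, let k be a positive even integer and k' a positive integer with 4n = 4k'² + k², k² < n, and k < k'. Then k' − k/2 is strictly best mod k', k' − k/2 ≡ −(k' + k/2) (mod k'), and |(k' − k/2)² − n| = k'·k; hence (k', k' − k/2, k) is a step and is the unique successor of the twin step (k, k' + k/2, k'). -/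
theorem stmt_9 (n k k' t : ℤ) (hn : 0 < n) (hns : ¬ IsSquare n)
    (hk : 0 < k) (hk' : 0 < k') (ht : k = 2 * t)
    (hsum : 4 * n = 4 * k' ^ 2 + k ^ 2) (hkn : k ^ 2 < n) (hkk' : k < k') :
    IsStrictBest n k' (k' - t) ∧
    k' - t ≡ -(k' + t) [ZMOD k'] ∧
    |(k' - t) ^ 2 - n| = k' * k ∧
    IsStep n k' (k' - t) k ∧
    (∀ m'' k''' : ℤ, IsStep n k' m'' k''' → m'' ≡ -(k' + t) [ZMOD k'] →
      m'' = k' - t ∧ k''' = k) := by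
  have htpos : 0 < t := by omega
  have hnval : n = k' ^ 2 + t ^ 2 := by nlinarith
  have ht2 : 2 * t < k' := by omega
  have habs : |(k' - t) ^ 2 - n| = k' * k := by
    have : (k' - t) ^ 2 - n = -(k' * k) := by rw [hnval, ht]; ring
    rw [this, abs_neg, abs_of_pos (by positivity)]
  have hsb : IsStrictBest n k' (k' - t) := by
    intro m' hm' hmod hne
    obtain ⟨c, hc⟩ : ∃ c, m' = (k' - t) + c * k' := by
      obtain ⟨c, hc⟩ := hmod.dvd
      exact ⟨-c, by linear_combination -hc⟩
    have hc1 : 1 ≤ c := by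
      rcases lt_or_ge c 1 with h | h
      · rcases eq_or_lt_of_le (show c ≤ 0 by omega) with h0 | h0
        · exact absurd (by rw [hc, h0]; ring) hne
        · have h1 : c * k' ≤ (-1) * k' :=
            mul_le_mul_of_nonneg_right (by omega) hk'.le
          linarith
      · exact h
    have key : k' * k < m' ^ 2 - n := by
      have h1 : 0 < c * k' - 2 * t := by nlinarith
      have h2 : 0 < (c + 2) * k' := by positivity
      have := mul_pos h1 h2
      rw [hc, hnval, ht]; nlinarith
    rw [habs]
    calc k' * k < m' ^ 2 - n := key
      _ ≤ |m' ^ 2 - n| := le_abs_self _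
  have hcong : k' - t ≡ -(k' + t) [ZMOD k'] :=
    Int.modEq_iff_dvd.mpr ⟨-2, by ring⟩
  refine ⟨hsb, hcong, habs, ?_, ?_⟩
  · refine ⟨hk', by omega, hk, ?_, habs, fun m' h1 h2 => ?_⟩
    · nlinarith
    · rcases eq_or_ne m' (k' - t) with h | h
      · rw [h]
      · exact (hsb m' h1 h2 h).le
  · intro m'' k''' hstep hmod
    obtain ⟨_, hm''pos, hk'''pos, _, habs'', hbest''⟩ := hstep
    have hmod2 : m'' ≡ k' - t [ZMOD k'] := hmod.trans hcong.symm
    have hm'' : m'' = k' - t := by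
      by_contra h
      have h1 := hsb m'' hm''pos hmod2 h
      have h2 := hbest'' (k' - t) (by omega) hmod2.symm
      omega
    refine ⟨hm'', ?_⟩
    rw [hm'', habs] at habs''
    have : k' * k''' = k' * k := habs''.symm
    exact (mul_left_cancel₀ (by omega) this)
end

section
/- Let n be a nonsquare positive integer, and let (k_0, m_0, k_1), (k_1, m_1, k_2), …, (k_N, m_N, k_{N+1}) be a finite chain of steps such that k_0 = 1 and, for every 1 ≤ i ≤ N, k_i divides m_{i−1} + m_i. Then every step (k_i, m_i, k_{i+1}) of the chain is reduced, i.e. m_i is best mod k_{i+1} for every 0 ≤ i ≤ N. -/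
set_option maxHeartbeats 1000000

private lemma abs_le_abs_of_add_nonneg {a b : ℤ} (hab : a ≤ b) (h : 0 ≤ a + b) :
    |a| ≤ |b| := by
  rcases abs_cases a with ⟨h1, h2⟩ | ⟨h1, h2⟩ <;> rcases abs_cases b with ⟨h3, h4⟩ | ⟨h3, h4⟩ <;>
    linarith

private lemma abs_le_abs_of_add_nonpos {a b : ℤ} (hab : a ≤ b) (h : a + b ≤ 0) :
    |b| ≤ |a| := by
  rcases abs_cases a with ⟨h1, h2⟩ | ⟨h1, h2⟩ <;> rcases abs_cases b with ⟨h3, h4⟩ | ⟨h3, h4⟩ <;>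
    linarith

private lemma add_nonneg_of_abs_le {a b : ℤ} (hab : a < b) (h : |a| ≤ |b|) : 0 ≤ a + b := by
  rcases abs_cases a with ⟨h1, h2⟩ | ⟨h1, h2⟩ <;> rcases abs_cases b with ⟨h3, h4⟩ | ⟨h3, h4⟩ <;>
    linarith

private lemma add_nonpos_of_abs_le {a b : ℤ} (hab : a < b) (h : |b| ≤ |a|) : a + b ≤ 0 := by
  rcases abs_cases a with ⟨h1, h2⟩ | ⟨h1, h2⟩ <;> rcases abs_cases b with ⟨h3, h4⟩ | ⟨h3, h4⟩ <;>
    linarith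

private lemma isBest_iff {n k m : ℤ} (hk : 0 < k) (hm : 0 < m) :
    IsBest n k m ↔ 2 * n ≤ m ^ 2 + (m + k) ^ 2 ∧ (m ≤ k ∨ m ^ 2 + (m - k) ^ 2 ≤ 2 * n) := by
  constructor
  · intro hb
    constructor
    · have h1 := hb (m + k) (by linarith) (by rw [Int.modEq_iff_dvd]; exact ⟨-1, by ring⟩)
      have h2 : m ^ 2 - n < (m + k) ^ 2 - n := by
        have := mul_pos hm hk
        have := mul_pos hk hk
        nlinarith
      have := add_nonneg_of_abs_le h2 h1
      linarith
    · by_cases hmk : m ≤ k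
      · exact Or.inl hmk
      · right
        push_neg at hmk
        have h1 := hb (m - k) (by linarith) (by rw [Int.modEq_iff_dvd]; exact ⟨1, by ring⟩)
        have h2 : (m - k) ^ 2 - n < m ^ 2 - n := by
          have := mul_pos hk (show (0:ℤ) < 2 * m - k by linarith)
          nlinarith
        have := add_nonpos_of_abs_le h2 h1
        linarith
  · rintro ⟨h1, h2⟩ m' hm' hmod
    have hd : k ∣ m - m' := hmod.dvd
    obtain ⟨t, ht⟩ := hd
    rcases lt_trichotomy m' m with h | h | h
    · have htpos : 1 ≤ t := by
        by_contra hc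
        push_neg at hc
        have : k * t ≤ 0 := mul_nonpos_of_nonneg_of_nonpos hk.le (by omega)
        linarith
      have hle : m' ≤ m - k := by
        have := mul_le_mul_of_nonneg_left htpos hk.le
        linarith
      have hmk : k < m := by linarith
      rcases h2 with h2 | h2
      · linarith
      · apply abs_le_abs_of_add_nonpos
        · have := mul_nonneg (by linarith : (0:ℤ) ≤ m - m') (by linarith : (0:ℤ) ≤ m + m')
          nlinarith
        · have := mul_nonneg (by linarith : (0:ℤ) ≤ m - k - m')
            (by linarith : (0:ℤ) ≤ m - k + m')
          nlinarith
    · rw [h]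
    · have htneg : t ≤ -1 := by
        by_contra hc
        push_neg at hc
        have : 0 ≤ k * t := mul_nonneg hk.le (by omega)
        linarith
      have hge : m + k ≤ m' := by
        have := mul_le_mul_of_nonneg_left htneg hk.le
        linarith
      apply abs_le_abs_of_add_nonneg
      · have := mul_nonneg (by linarith : (0:ℤ) ≤ m' - m) (by linarith : (0:ℤ) ≤ m' + m)
        nlinarith
      · have := mul_nonneg (by linarith : (0:ℤ) ≤ m' - (m + k))
          (by linarith : (0:ℤ) ≤ m' + (m + k))
        nlinarith

private lemma step_reduced {n q p k m k' : ℤ} (hns : ¬ IsSquare n)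
    (hq : 0 < q) (hp : 0 < p) (hk : 0 < k) (hm : 0 < m) (hk' : 0 < k')
    (hq2 : q ^ 2 < n) (hk2 : k ^ 2 < n)
    (hpe : |p ^ 2 - n| = q * k) (hme : |m ^ 2 - n| = k * k')
    (hbqp : IsBest n q p) (hbkp : IsBest n k p) (hbkm : IsBest n k m)
    (hdk : k ∣ p + m) : IsBest n k' m := by
  have hmn : m ^ 2 ≠ n := fun h => hns ⟨m, by rw [← h]; ring⟩
  rw [isBest_iff hq hp] at hbqp
  rw [isBest_iff hk hp] at hbkp
  rw [isBest_iff hk hm] at hbkm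
  rw [isBest_iff hk' hm]
  obtain ⟨t, ht⟩ := hdk
  have hinvA : m ^ 2 < n → 2 * k ≤ 2 * m + k' := by
    intro hmlt
    by_contra hc
    push_neg at hc
    have hme' : n - m ^ 2 = k * k' := by
      rw [← hme, abs_of_neg (by linarith : m ^ 2 - n < 0)]; ring
    have hmltk : m ≤ k - 1 := by linarith
    have hub : n ≤ k ^ 2 + (k - m) ^ 2 - k := by
      have hprod := mul_le_mul_of_nonneg_left (by linarith : k' ≤ 2 * k - 2 * m - 1) hk.le
      linarith
    have ht1 : 1 ≤ t := by
      by_contra h0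
      push_neg at h0
      have : k * t ≤ 0 := mul_nonpos_of_nonneg_of_nonpos hk.le (by omega)
      linarith
    have ht3 : t = 1 ∨ t = 2 ∨ 3 ≤ t := by omega
    rcases ht3 with rfl | rfl | ht3
    · -- p = k - m
      have hpv : p = k - m := by linarith
      subst hpv
      have hp2 : (k - m) ^ 2 < n := by
        have := mul_pos (show (0:ℤ) < m by linarith) (show (0:ℤ) < 2 * k - m by linarith)
        linarith
      have hpe' : n - (k - m) ^ 2 = q * k := by
        rw [← hpe, abs_of_neg (by linarith : (k - m) ^ 2 - n < 0)]; ring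
      have hdiv : q * (2 * k) ≤ q * (2 * (k - m) + q) := by linarith [hbqp.1]
      have h2k := le_of_mul_le_mul_left hdiv hq
      have hq2m : 2 * m ≤ q := by linarith
      have hlow : 2 * m * k + (k - m) ^ 2 ≤ n := by
        have := mul_le_mul_of_nonneg_right hq2m hk.le
        linarith
      have hdiv2 : k * k ≤ k * (2 * m) := by linarith [hbkm.1]
      linarith
    · -- p = 2k - m
      have hpv : p = 2 * k - m := by linarith
      subst hpv
      have hp2 : n < (2 * k - m) ^ 2 := by
        have := mul_nonneg hk.le (show (0:ℤ) ≤ k - m by linarith)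
        linarith
      have hpe' : (2 * k - m) ^ 2 - n = q * k := by
        rw [← hpe, abs_of_pos (by linarith : 0 < (2 * k - m) ^ 2 - n)]
      have hdivq : (2 * (k - m) + 1) * k ≤ q * k := by linarith
      have hqge : 2 * (k - m) + 1 ≤ q := le_of_mul_le_mul_right hdivq hk
      rcases hbqp.2 with h | h
      · have := mul_nonneg (by linarith : (0:ℤ) ≤ q - (2 * k - m))
          (by linarith : (0:ℤ) ≤ q + (2 * k - m))
        nlinarith
      · have hdiv3 : q * q ≤ q * (2 * (k - m)) := by linarith
        have := le_of_mul_le_mul_left hdiv3 hq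
        linarith
    · -- p ≥ 3k - m
      have hpge : 3 * k - m ≤ p := by
        have := mul_le_mul_of_nonneg_left ht3 hk.le
        linarith
      have hpk : k < p := by linarith
      have hbd : p ^ 2 + (p - k) ^ 2 ≤ 2 * n := hbkp.2.resolve_left (not_le.mpr hpk)
      have hq1 := mul_nonneg (by linarith : (0:ℤ) ≤ p - (3 * k - m))
        (by linarith : (0:ℤ) ≤ p + (3 * k - m))
      have hq2' := mul_nonneg (by linarith : (0:ℤ) ≤ p - k - (2 * k - m))
        (by linarith : (0:ℤ) ≤ p - k + (2 * k - m))
      have hq3 := mul_nonneg hk.le (show (0:ℤ) ≤ k - m by linarith)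
      nlinarith [hub, hbd, hq1, hq2', hq3]
  have hinvB : n < m ^ 2 → m ≤ k' ∨ 2 * k + k' ≤ 2 * m := by
    intro hngt
    by_contra hc
    push_neg at hc
    obtain ⟨hck', hc2⟩ := hc
    have hme' : m ^ 2 - n = k * k' := by
      rw [← hme, abs_of_pos (by linarith : 0 < m ^ 2 - n)]
    have hub : n ≤ (m - k) ^ 2 + k ^ 2 - k := by
      have hprod := mul_le_mul_of_nonneg_left (by linarith : 2 * m - 2 * k + 1 ≤ k') hk.le
      linarith
    have hmk : k < m := by
      by_contra h0
      push_neg at h0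
      have h1 : m * m ≤ k * k := mul_le_mul h0 h0 hm.le hk.le
      nlinarith
    have hbd : m ^ 2 + (m - k) ^ 2 ≤ 2 * n := hbkm.2.resolve_left (not_le.mpr hmk)
    have hk2r : 2 * (m - k) + 2 ≤ k := by
      have hdd : k * (2 * (m - k) + 2) ≤ k * k := by linarith
      exact le_of_mul_le_mul_left hdd hk
    have ht2 : 2 ≤ t := by
      by_contra h0
      push_neg at h0
      have : k * t ≤ k * 1 := mul_le_mul_of_nonneg_left (by omega) hk.le
      linarith
    have ht4 : t = 2 ∨ t = 3 ∨ 4 ≤ t := by omega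
    rcases ht4 with rfl | rfl | ht4
    · -- p = 2k - m
      have hpv : p = 2 * k - m := by linarith
      subst hpv
      have hp2 : (2 * k - m) ^ 2 < n := by
        have := mul_pos (show (0:ℤ) < m - k by linarith)
          (show (0:ℤ) < 3 * k - m by linarith)
        linarith
      have hpe' : n - (2 * k - m) ^ 2 = q * k := by
        rw [← hpe, abs_of_neg (by linarith : (2 * k - m) ^ 2 - n < 0)]; ring
      have hdiv : q * (2 * k) ≤ q * (2 * (2 * k - m) + q) := by linarith [hbqp.1]
      have h2k := le_of_mul_le_mul_left hdiv hq
      have hqge : 2 * (m - k) ≤ q := by linarith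
      have := mul_le_mul_of_nonneg_right hqge hk.le
      linarith
    · -- p = 3k - m
      have hpv : p = 3 * k - m := by linarith
      subst hpv
      have hpk : k < 3 * k - m := by linarith
      have hbdp := hbkp.2.resolve_left (not_le.mpr hpk)
      have hprod := mul_le_mul_of_nonneg_left (show 2 * m ≤ 3 * k - 2 by linarith) hk.le
      linarith [hub, hbdp]
    · -- p ≥ 4k - m
      have hpge : 4 * k - m ≤ p := by
        have := mul_le_mul_of_nonneg_left ht4 hk.le
        linarith
      have hpk : k < p := by linarith
      have hbdp : p ^ 2 + (p - k) ^ 2 ≤ 2 * n := hbkp.2.resolve_left (not_le.mpr hpk)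
      have hq1 := mul_nonneg (by linarith : (0:ℤ) ≤ p - (3 * k - m))
        (by linarith : (0:ℤ) ≤ p + (3 * k - m))
      have hq2' := mul_nonneg (by linarith : (0:ℤ) ≤ p - k - (3 * k - m))
        (by linarith : (0:ℤ) ≤ p - k + (3 * k - m))
      have hprod := mul_le_mul_of_nonneg_left (show 2 * m ≤ 3 * k - 2 by linarith) hk.le
      nlinarith [hub, hbdp, hq1, hq2', hprod]
  rcases lt_or_gt_of_ne hmn with hlt | hgt
  · have hme' : n - m ^ 2 = k * k' := by
      rw [← hme, abs_of_neg (by linarith : m ^ 2 - n < 0)]; ring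
    constructor
    · have h2k := hinvA hlt
      have := mul_le_mul_of_nonneg_left h2k hk'.le
      linarith
    · by_cases hmk' : m ≤ k'
      · exact Or.inl hmk'
      · right
        push_neg at hmk'
        have hnmk : n ≤ (m + k) ^ 2 := by linarith [hbkm.1]
        have hdiv : k * k' ≤ k * (2 * m + k) := by linarith
        have hkub : k' ≤ 2 * m + k := le_of_mul_le_mul_left hdiv hk
        have := mul_nonneg hk'.le (by linarith : (0:ℤ) ≤ 2 * k + 2 * m - k')
        linarith
  · have hme' : m ^ 2 - n = k * k' := by
      rw [← hme, abs_of_pos (by linarith : 0 < m ^ 2 - n)]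
    constructor
    · have := mul_pos hm hk'
      have := sq_nonneg k'
      linarith
    · rcases hinvB hgt with h | h
      · exact Or.inl h
      · right
        have := mul_nonneg hk'.le (by linarith : (0:ℤ) ≤ 2 * m - 2 * k - k')
        linarith

theorem stmt_11 (n : ℤ) (hn : 0 < n) (hns : ¬ IsSquare n)
    (N : ℕ) (k : ℕ → ℤ) (m : ℕ → ℤ)
    (hchain : ∀ i ≤ N, IsStep n (k i) (m i) (k (i + 1)))
    (hk0 : k 0 = 1)
    (hdvd : ∀ i, 1 ≤ i → i ≤ N → k i ∣ m (i - 1) + m i) :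
    ∀ i ≤ N, IsBest n (k (i + 1)) (m i) := by
  intro i
  induction i with
  | zero =>
    intro h0
    obtain ⟨hk1, hm1, hk1', hklt, habs, hbest⟩ := hchain 0 h0
    intro m' hm' _
    refine hbest m' hm' ?_
    rw [hk0]
    exact Int.modEq_one
  | succ j ih =>
    intro hj
    have hj' : j ≤ N := by omega
    obtain ⟨hq, hp, hk1, hq2, hpe, hbqp⟩ := hchain j hj'
    obtain ⟨hk1', hm1, hk2', hk2, hme, hbkm⟩ := hchain (j + 1) hj
    have hbkp : IsBest n (k (j + 1)) (m j) := ih hj'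
    have hdk : k (j + 1) ∣ m j + m (j + 1) := by
      have := hdvd (j + 1) (by omega) hj
      simpa using this
    exact step_reduced hns hq hp hk1' hm1 hk2' hq2 hk2 hpe hme hbqp hbkp hbkm hdk
end

section
/- Let n be a nonsquare positive integer, let (k, m, k') be a reduced step, and let (k', m', k'') be a successor of it (so (k', m', k'') is a step with m' ≡ −m (mod k')). Then (k'', m', k') is a step, and (k', m, k) is a step which is a successor of (k'', m', k'). -/
private lemma lt_of_sq_lt_sq {a b : ℤ} (ha : 0 ≤ a) (hb : 0 ≤ b) (h : a ^ 2 < b ^ 2) :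
    a < b := by
  by_contra hc
  push_neg at hc
  nlinarith

/-- Local minimality implies global bestness. -/
private lemma isBest_of_local (n k m : ℤ) (hk : 0 < k) (hm : 0 < m)
    (h₁ : |m ^ 2 - n| ≤ |(m + k) ^ 2 - n|)
    (h₂ : k < m → |m ^ 2 - n| ≤ |(m - k) ^ 2 - n|) : IsBest n k m := by
  intro p hp hpm
  obtain ⟨t, ht⟩ := hpm.dvd
  rcases lt_trichotomy t 0 with htn | rfl | htp
  · -- p ≥ m + k
    have h1 : k * 1 ≤ k * (-t) := by
      apply mul_le_mul_of_nonneg_left (by omega) hk.le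
    have hp1 : m + k ≤ p := by linarith
    have hn1 : n < (m + k) ^ 2 := by
      by_contra hc
      push_neg at hc
      have habs : |(m + k) ^ 2 - n| = n - (m + k) ^ 2 := by
        rw [abs_of_nonpos (by linarith)]; ring
      have h2 : -(m ^ 2 - n) ≤ |m ^ 2 - n| := neg_le_abs _
      nlinarith [h₁, habs]
    calc |m ^ 2 - n| ≤ |(m + k) ^ 2 - n| := h₁
      _ = (m + k) ^ 2 - n := abs_of_pos (by linarith)
      _ ≤ p ^ 2 - n := by nlinarith
      _ ≤ |p ^ 2 - n| := le_abs_self _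
  · have hpm' : p = m := by linarith [ht]
    rw [hpm']
  · -- p ≤ m - k
    have h1 : k * 1 ≤ k * t := by
      apply mul_le_mul_of_nonneg_left (by omega) hk.le
    have hp1 : p ≤ m - k := by linarith
    have hkm : k < m := by linarith
    have h₂' := h₂ hkm
    have hn1 : (m - k) ^ 2 < n := by
      by_contra hc
      push_neg at hc
      have habs : |(m - k) ^ 2 - n| = (m - k) ^ 2 - n := abs_of_nonneg (by linarith)
      have h2 : m ^ 2 - n ≤ |m ^ 2 - n| := le_abs_self _
      nlinarith [h₂', habs]
    calc |m ^ 2 - n| ≤ |(m - k) ^ 2 - n| := h₂'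
      _ = n - (m - k) ^ 2 := by rw [abs_of_nonpos (by linarith)]; ring
      _ ≤ n - p ^ 2 := by nlinarith
      _ ≤ |p ^ 2 - n| := by rw [abs_sub_comm]; exact le_abs_self _

/-- Extraction: if `m² < n`, `n - m² = K1*K2`, `m` best mod `K1`, then `2*K2 ≤ 2*m + K1`. -/
private lemma best_lin_lt {n K1 K2 m : ℤ} (hK1 : 0 < K1) (hK2 : 0 < K2) (hm : 0 < m)
    (hb : IsBest n K1 m) (he : n - m ^ 2 = K1 * K2) : 2 * K2 ≤ 2 * m + K1 := by
  have hcong : m + K1 ≡ m [ZMOD K1] := Int.modEq_iff_dvd.mpr ⟨-1, by ring⟩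
  have h := hb (m + K1) (by linarith) hcong
  have habs : |m ^ 2 - n| = K1 * K2 := by
    rw [abs_of_neg (by nlinarith)]; linarith
  have h2 : n < (m + K1) ^ 2 := by
    by_contra hc
    push_neg at hc
    have habs2 : |(m + K1) ^ 2 - n| = n - (m + K1) ^ 2 := by
      rw [abs_of_nonpos (by linarith)]; ring
    nlinarith [h, habs, habs2]
  have habs2 : |(m + K1) ^ 2 - n| = (m + K1) ^ 2 - n := abs_of_pos (by linarith)
  rw [habs, habs2] at h
  have h3 : K1 * (2 * K2) ≤ K1 * (2 * m + K1) := by nlinarith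
  exact le_of_mul_le_mul_left h3 hK1

/-- Extraction: if `m² > n`, `m² - n = K1*K2`, `K1 < m`, `m` best mod `K1`,
then `2*K2 + K1 ≤ 2*m`. -/
private lemma best_lin_gt {n K1 K2 m : ℤ} (hns : ¬ IsSquare n) (hK1 : 0 < K1) (hK2 : 0 < K2)
    (hb : IsBest n K1 m) (he : m ^ 2 - n = K1 * K2) (hmk : K1 < m) :
    2 * K2 + K1 ≤ 2 * m := by
  have hcong : m - K1 ≡ m [ZMOD K1] := Int.modEq_iff_dvd.mpr ⟨1, by ring⟩
  have h := hb (m - K1) (by linarith) hcong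
  have habs : |m ^ 2 - n| = K1 * K2 := by
    rw [abs_of_pos (by nlinarith)]; linarith
  have h2 : (m - K1) ^ 2 < n := by
    rcases lt_trichotomy ((m - K1) ^ 2) n with h' | h' | h'
    · exact h'
    · exact absurd ⟨m - K1, by rw [← h']; ring⟩ hns
    · exfalso
      have habs2 : |(m - K1) ^ 2 - n| = (m - K1) ^ 2 - n := abs_of_pos (by linarith)
      nlinarith [h, habs, habs2]
  have habs2 : |(m - K1) ^ 2 - n| = n - (m - K1) ^ 2 := by
    rw [abs_of_neg (by linarith)]; ring
  rw [habs, habs2] at h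
  have h3 : K1 * (2 * K2 + K1) ≤ K1 * (2 * m) := by nlinarith
  exact le_of_mul_le_mul_left h3 hK1

set_option maxHeartbeats 2000000 in
theorem stmt_12 (n k m k' m' k'' : ℤ) (hn : 0 < n) (hns : ¬ IsSquare n)
    (hstep : IsStep n k m k') (hred : IsBest n k' m)
    (hsucc : IsStep n k' m' k'') (hcong : m' ≡ -m [ZMOD k']) :
    IsStep n k'' m' k' ∧ IsStep n k' m k ∧ m ≡ -m' [ZMOD k'] := by
  obtain ⟨hk, hm, hk'1, hkn, heq, hbk⟩ := hstep
  obtain ⟨hk', hm', hk'', hk'n, heq', hbk'⟩ := hsucc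
  -- congruence facts
  have hdvd : k' ∣ m + m' := by
    obtain ⟨t, ht⟩ := hcong.dvd
    exact ⟨-t, by linarith⟩
  have hcong2 : m ≡ -m' [ZMOD k'] := by
    apply Int.modEq_iff_dvd.mpr
    obtain ⟨t, ht⟩ := hdvd
    exact ⟨-t, by linarith⟩
  obtain ⟨q, hq⟩ : ∃ q, m + m' = k' * q := hdvd
  have hq1 : 1 ≤ q := by
    by_contra hc
    push_neg at hc
    have : k' * q ≤ k' * 0 := mul_le_mul_of_nonneg_left (by omega) hk'.le
    nlinarith
  have hm2 : m ^ 2 ≠ n := fun h => hns ⟨m, by rw [← h]; ring⟩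
  have hm'2 : m' ^ 2 ≠ n := fun h => hns ⟨m', by rw [← h]; ring⟩
  have hk''2 : k'' ^ 2 ≠ n := fun h => hns ⟨k'', by rw [← h]; ring⟩
  -- main case analysis on the sign of m'^2 - n
  have main : k'' ^ 2 < n ∧ IsBest n k'' m' := by
    rcases lt_or_gt_of_ne hm'2 with hs' | hs'
    · -- m'^2 < n
      have e2 : n - m' ^ 2 = k' * k'' := by
        have h := heq'
        rw [abs_of_neg (by linarith)] at h
        linarith
      have lin3 : 2 * k'' ≤ 2 * m' + k' := best_lin_lt hk' hk'' hm' hbk' e2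
      have hk''n : k'' ^ 2 < n := by
        have h5 : k'' ^ 2 ≤ n := by
          nlinarith [sq_nonneg (2 * m' - 2 * k''),
            mul_nonneg (show (0:ℤ) ≤ 2 * m' + k' - 2 * k'' by linarith) hk''.le]
        exact lt_of_le_of_ne h5 hk''2
      -- crux: 2*k' ≤ 2*m' + k''
      have hgoal : 2 * k' ≤ 2 * m' + k'' := by
        by_contra hneg
        push_neg at hneg
        have hkk' : k'' ≤ k' - 1 := by linarith
        rcases lt_or_gt_of_ne hm2 with hs | hs
        · -- m^2 < n
          have e1 : n - m ^ 2 = k * k' := by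
            have h := heq
            rw [abs_of_neg (by linarith)] at h
            linarith
          have e1' : n - m ^ 2 = k' * k := by linarith [e1, mul_comm k k']
          have lin1 : 2 * k' ≤ 2 * m + k := best_lin_lt hk hk'1 hm hbk e1
          have hid : k - k'' = (m' - m) * q := by
            have h0 : k' * (k - k'') = k' * ((m' - m) * q) := by
              linear_combination e2 - e1 + (m' - m) * hq
            exact mul_left_cancel₀ hk'.ne' h0
          rcases lt_or_ge q 3 with hq3 | hq3
          · interval_cases q
            · nlinarith [hid, lin1, hneg, lin3, hq]
            · nlinarith [hid, lin1, hneg, hq]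
          · rcases le_or_gt m' m with hmm | hmm
            · have h1 : (m' - m) * q ≤ (m' - m) * 3 :=
                mul_le_mul_of_nonpos_left (by omega) (by linarith)
              nlinarith [hid, h1, lin1, hneg]
            · have h3k : k' * 3 ≤ k' * q := mul_le_mul_of_nonneg_left (by omega) hk'.le
              nlinarith [h3k, hq, hneg, hmm]
        · -- m^2 > n
          have e1 : m ^ 2 - n = k * k' := by
            have h := heq
            rw [abs_of_pos (by linarith)] at h
            linarith
          have e1' : m ^ 2 - n = k' * k := by linarith [e1, mul_comm k k']
          have hmk : k < m := lt_of_sq_lt_sq hk.le hm.le (by nlinarith)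
          have hmk' : k' < m := lt_of_sq_lt_sq hk'.le hm.le (by nlinarith)
          have lin1 : 2 * k' + k ≤ 2 * m := best_lin_gt hns hk hk'1 hbk e1 hmk
          have hid : (m - m') * q = k + k'' := by
            have h0 : k' * ((m - m') * q) = k' * (k + k'') := by
              linear_combination e1 + e2 - (m - m') * hq
            exact mul_left_cancel₀ hk'.ne' h0
          rcases lt_or_ge q 3 with hq3 | hq3
          · interval_cases q
            · nlinarith [hq, hmk', hm']
            · nlinarith [hid, lin1, hneg, hq]
          · have h3k : k' * 3 ≤ k' * q := mul_le_mul_of_nonneg_left (by omega) hk'.le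
            have hd : k'' + k' + 1 ≤ m - m' := by nlinarith [h3k, hq, hneg]
            have hmul : 3 * ((m - m') - k') ≤ q * ((m - m') - k') :=
              mul_le_mul_of_nonneg_right (by omega) (by linarith)
            nlinarith [hid, hmul, lin1, hd, hq]
      -- assemble local conditions
      have C1 : |m' ^ 2 - n| ≤ |(m' + k'') ^ 2 - n| := by
        have h0 : k'' * k' ≤ k'' * (2 * m' + k'' - k') :=
          mul_le_mul_of_nonneg_left (by linarith) hk''.le
        calc |m' ^ 2 - n| = k' * k'' := heq'
          _ ≤ (m' + k'') ^ 2 - n := by nlinarith [h0, e2]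
          _ ≤ |(m' + k'') ^ 2 - n| := le_abs_self _
      have C2 : k'' < m' → |m' ^ 2 - n| ≤ |(m' - k'') ^ 2 - n| := by
        intro h
        have h0 : k'' * k' ≤ k'' * (k' + 2 * m' - k'') :=
          mul_le_mul_of_nonneg_left (by linarith) hk''.le
        calc |m' ^ 2 - n| = k' * k'' := heq'
          _ ≤ n - (m' - k'') ^ 2 := by nlinarith [h0, e2]
          _ ≤ |(m' - k'') ^ 2 - n| := by rw [abs_sub_comm]; exact le_abs_self _
      exact ⟨hk''n, isBest_of_local n k'' m' hk'' hm' C1 C2⟩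
    · -- m'^2 > n
      have e2 : m' ^ 2 - n = k' * k'' := by
        have h := heq'
        rw [abs_of_pos (by linarith)] at h
        linarith
      have hm'k' : k' < m' := lt_of_sq_lt_sq hk'.le hm'.le (by nlinarith)
      have lin3 : 2 * k'' + k' ≤ 2 * m' := best_lin_gt hns hk' hk'' hbk' e2 hm'k'
      have hk''n : k'' ^ 2 < n := by
        have h5 : k'' ^ 2 ≤ n := by nlinarith [sq_nonneg k', lin3]
        exact lt_of_le_of_ne h5 hk''2
      -- crux: k'' < m' → 2*k' + k'' ≤ 2*m'
      have hgoal : k'' < m' → 2 * k' + k'' ≤ 2 * m' := by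
        intro hA
        by_contra hneg
        push_neg at hneg
        have hkk' : k'' ≤ k' - 1 := by linarith
        rcases lt_or_gt_of_ne hm2 with hs | hs
        · -- m^2 < n
          have e1 : n - m ^ 2 = k * k' := by
            have h := heq
            rw [abs_of_neg (by linarith)] at h
            linarith
          have lin1 : 2 * k' ≤ 2 * m + k := best_lin_lt hk hk'1 hm hbk e1
          have hid : (m' - m) * q = k + k'' := by
            have h0 : k' * ((m' - m) * q) = k' * (k + k'') := by
              linear_combination e1 + e2 - (m' - m) * hq
            exact mul_left_cancel₀ hk'.ne' h0
          rcases lt_or_ge q 3 with hq3 | hq3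
          · interval_cases q
            · nlinarith [hq, hm'k', hm]
            · nlinarith [hid, lin1, hneg, hq]
          · have h3k : k' * 3 ≤ k' * q := mul_le_mul_of_nonneg_left (by omega) hk'.le
            have hmm : m < m' := by
              by_contra hc
              push_neg at hc
              have : (m' - m) * q ≤ 0 :=
                mul_nonpos_of_nonpos_of_nonneg (by linarith) (by omega)
              nlinarith [hid]
            nlinarith [h3k, hq, hneg, hmm, hkk']
        · -- m^2 > n
          have e1 : m ^ 2 - n = k * k' := by
            have h := heq
            rw [abs_of_pos (by linarith)] at h
            linarith
          have e1' : m ^ 2 - n = k' * k := by linarith [e1, mul_comm k k']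
          have hmk : k < m := lt_of_sq_lt_sq hk.le hm.le (by nlinarith)
          have hmk' : k' < m := lt_of_sq_lt_sq hk'.le hm.le (by nlinarith)
          have lin1 : 2 * k' + k ≤ 2 * m := best_lin_gt hns hk hk'1 hbk e1 hmk
          have lin2 : 2 * k + k' ≤ 2 * m := best_lin_gt hns hk'1 hk hred e1' hmk'
          have hid : (m - m') * q = k - k'' := by
            have h0 : k' * ((m - m') * q) = k' * (k - k'') := by
              linear_combination e1 - e2 - (m - m') * hq
            exact mul_left_cancel₀ hk'.ne' h0
          -- range facts
          have hr1 : m - k' < m' := by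
            apply lt_of_sq_lt_sq (by linarith) hm'.le
            nlinarith [lin2, e1]
          -- pin q = 3
          have hq4 : q ≤ 3 := by
            by_contra hc
            push_neg at hc
            have : k' * 4 ≤ k' * q := mul_le_mul_of_nonneg_left (by omega) hk'.le
            nlinarith [hq, hr1, hneg, hkk']
          have hq3 : 3 ≤ q := by
            by_contra hc
            push_neg at hc
            have : k' * q ≤ k' * 2 := mul_le_mul_of_nonneg_left (by omega) hk'.le
            nlinarith [hq, hm'k', hmk']
          have hqe : q = 3 := le_antisymm hq4 hq3
          subst hqe
          nlinarith [hid, lin1, hneg, hq, hkk']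
      -- assemble local conditions
      have C1 : |m' ^ 2 - n| ≤ |(m' + k'') ^ 2 - n| := by
        calc |m' ^ 2 - n| = k' * k'' := heq'
          _ ≤ (m' + k'') ^ 2 - n := by nlinarith [e2, mul_pos hm' hk'', sq_nonneg k'']
          _ ≤ |(m' + k'') ^ 2 - n| := le_abs_self _
      have C2 : k'' < m' → |m' ^ 2 - n| ≤ |(m' - k'') ^ 2 - n| := by
        intro h
        have hg := hgoal h
        have h0 : k'' * k' ≤ k'' * (2 * m' - k'' - k') :=
          mul_le_mul_of_nonneg_left (by linarith) hk''.le
        calc |m' ^ 2 - n| = k' * k'' := heq'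
          _ ≤ n - (m' - k'') ^ 2 := by nlinarith [h0, e2]
          _ ≤ |(m' - k'') ^ 2 - n| := by rw [abs_sub_comm]; exact le_abs_self _
      exact ⟨hk''n, isBest_of_local n k'' m' hk'' hm' C1 C2⟩
  refine ⟨⟨hk'', hm', hk', main.1, by rw [heq', mul_comm], main.2⟩,
    ⟨hk', hm, hk, hk'n, by rw [heq, mul_comm], hred⟩, hcong2⟩
end

section
/- Let n be a nonsquare positive integer. There is no infinite run of the chakravala step sequence: for any sequences of integers (k_i)_{i≥0} and (m_i)_{i≥0} with k_0 = 1, all k_i > 0, and for every i ≥ 0: m_i > 0, m_i ≡ −m_{i−1} (mod k_i) (where m_{−1} := 0), m_i is best mod k_i, and k_i·k_{i+1} = |m_i² − n|, there exists an index i ≥ 1 with k_i = 1. -/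
namespace Chak

lemma sq_ne {n : ℤ} (hns : ¬ IsSquare n) (x : ℤ) : x ^ 2 ≠ n := by
  intro h
  exact hns ⟨x, by rw [← h]; ring⟩

lemma best_beats {n M x : ℤ} (b : IsBest n M x) {y : ℤ} (hy : 0 < y)
    (hdvd : M ∣ x - y) : |x ^ 2 - n| ≤ |y ^ 2 - n| :=
  b y hy (Int.modEq_iff_dvd.2 hdvd)

lemma win_up {n M x : ℤ} (hns : ¬ IsSquare n) (hM : 0 < M) (hx : 0 < x)
    (b : IsBest n M x) : n < (x + M) ^ 2 := by
  rcases lt_or_gt_of_ne (sq_ne hns (x + M)) with h | h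
  · -- (x+M)^2 < n, contradiction
    exfalso
    have hb := best_beats b (by positivity : (0:ℤ) < x + M) ⟨-1, by ring⟩
    have hx2 : x ^ 2 < n := by nlinarith
    rw [abs_of_neg (by linarith : x ^ 2 - n < 0),
        abs_of_neg (by linarith : (x + M) ^ 2 - n < 0)] at hb
    nlinarith
  · exact h

lemma win_dn {n M x : ℤ} (hns : ¬ IsSquare n) (hM : 0 < M)
    (b : IsBest n M x) (h : M < x) : (x - M) ^ 2 < n := by
  rcases lt_or_gt_of_ne (sq_ne hns (x - M)) with h' | h'
  · exact h'
  · exfalso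
    have hb := best_beats b (by linarith : (0:ℤ) < x - M) ⟨1, by ring⟩
    have hx2 : n < x ^ 2 := by nlinarith
    rw [abs_of_pos (by linarith : (0:ℤ) < x ^ 2 - n),
        abs_of_pos (by linarith : (0:ℤ) < (x - M) ^ 2 - n)] at hb
    nlinarith

/-- tie/twin structure for two best elements of the same class -/
lemma comp {n M u w : ℤ} (hns : ¬ IsSquare n) (hM : 0 < M)
    (hu : 0 < u) (hw : 0 < w) (hdvd : M ∣ u - w)
    (bu : IsBest n M u) (bw : IsBest n M w) :
    |u ^ 2 - n| = |w ^ 2 - n| ∧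
      (u = w ∨ ((u - w = M ∨ w - u = M) ∧ M * (u + w) = 2 * |u ^ 2 - n|)) := by
  have veq : |u ^ 2 - n| = |w ^ 2 - n| :=
    le_antisymm (best_beats bu hw hdvd)
      (best_beats bw hu (by simpa using (dvd_neg.2 hdvd)))
  refine ⟨veq, ?_⟩
  rcases eq_or_ne u w with h | hne
  · exact Or.inl h
  · right
    -- wlog-style: handle both orders with a helper
    have key : ∀ a b : ℤ, 0 < a → 0 < b → a < b → M ∣ b - a →
        IsBest n M a → IsBest n M b → |a ^ 2 - n| = |b ^ 2 - n| →
        b - a = M ∧ M * (a + b) = 2 * |a ^ 2 - n| := by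
      intro a b ha hb hab hd ba bb hv
      have ha2 : a ^ 2 ≠ n := sq_ne hns a
      have hb2 : b ^ 2 ≠ n := sq_ne hns b
      have hasq : a ^ 2 < n := by
        rcases lt_or_gt_of_ne ha2 with h | h
        · exact h
        · exfalso
          have hb2' : n < b ^ 2 := by nlinarith
          rw [abs_of_pos (by linarith : (0:ℤ) < a ^ 2 - n),
              abs_of_pos (by linarith : (0:ℤ) < b ^ 2 - n)] at hv
          nlinarith
      have hbsq : n < b ^ 2 := by
        rcases lt_or_gt_of_ne hb2 with h | h
        · exfalso
          rw [abs_of_neg (by linarith : a ^ 2 - n < 0),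
              abs_of_neg (by linarith : b ^ 2 - n < 0)] at hv
          nlinarith
        · exact h
      have hv' : n - a ^ 2 = b ^ 2 - n := by
        rw [abs_of_neg (by linarith : a ^ 2 - n < 0),
            abs_of_pos (by linarith : (0:ℤ) < b ^ 2 - n)] at hv
        linarith
      obtain ⟨t, ht⟩ := hd
      have htpos : 0 < t := by nlinarith [mul_pos hM (show (0:ℤ) < t by nlinarith)]
      have ht1 : t = 1 := by
        by_contra hne1
        have ht2 : 2 ≤ t := by omega
        -- intermediate representative a + M beats a
        have hr : (0:ℤ) < a + M := by linarith
        have hbeat := best_beats ba hr ⟨-1, by ring⟩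
        have hrltb : a + M < b := by nlinarith
        have hr2 : (a + M) ^ 2 ≠ n := sq_ne hns (a + M)
        rcases lt_or_gt_of_ne hr2 with h | h
        · rw [abs_of_neg (by linarith : a ^ 2 - n < 0),
              abs_of_neg (by linarith : (a + M) ^ 2 - n < 0)] at hbeat
          nlinarith
        · rw [abs_of_neg (by linarith : a ^ 2 - n < 0),
              abs_of_pos (by linarith : (0:ℤ) < (a + M) ^ 2 - n)] at hbeat
          nlinarith
      constructor
      · rw [ht, ht1]; ring
      · rw [abs_of_neg (by linarith : a ^ 2 - n < 0)]
        have : b - a = M := by rw [ht, ht1]; ring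
        nlinarith
    rcases lt_or_gt_of_ne hne with h | h
    · obtain ⟨h1, h2⟩ := key u w hu hw h (by simpa using (dvd_neg.2 hdvd)) bu bw veq
      exact ⟨Or.inr h1, by linarith⟩
    · obtain ⟨h1, h2⟩ := key w u hw hu h hdvd bw bu veq.symm
      refine ⟨Or.inl h1, ?_⟩
      rw [veq]
      have : w + u = u + w := by ring
      linarith [h2]


/-- converse: neighbor conditions imply bestness -/
lemma mkbest {n M x : ℤ} (hns : ¬ IsSquare n) (hM : 0 < M) (hx : 0 < x)
    (hup : n < (x + M) ^ 2)
    (hupb : x ^ 2 < n → 2 * (n - x ^ 2) ≤ M * (2 * x + M))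
    (hdn : n < x ^ 2 → M < x → (x - M) ^ 2 < n ∧ 2 * (x ^ 2 - n) ≤ M * (2 * x - M)) :
    IsBest n M x := by
  intro y hy hcong
  have hdvd : M ∣ x - y := Int.modEq_iff_dvd.1 hcong
  obtain ⟨t, ht⟩ := hdvd
  have hy' : y = x - M * t := by linarith
  rcases lt_trichotomy t 0 with htn | ht0 | htp
  · -- t ≤ -1 : y ≥ x + M
    have hyx : x + M ≤ y := by nlinarith
    rcases lt_or_gt_of_ne (sq_ne hns x) with hs | hs
    · rw [abs_of_neg (by linarith : x ^ 2 - n < 0),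
          abs_of_pos (by nlinarith : (0:ℤ) < y ^ 2 - n)]
      nlinarith [hupb hs]
    · rw [abs_of_pos (by linarith : (0:ℤ) < x ^ 2 - n),
          abs_of_pos (by nlinarith : (0:ℤ) < y ^ 2 - n)]
      nlinarith
  · simp [ht0] at hy'; simp [hy']
  · -- t ≥ 1 : y ≤ x - M
    have hyx : y ≤ x - M := by nlinarith
    have hMx : M < x := by linarith
    rcases lt_or_gt_of_ne (sq_ne hns x) with hs | hs
    · rw [abs_of_neg (by linarith : x ^ 2 - n < 0),
          abs_of_neg (by nlinarith : y ^ 2 - n < 0)]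
      nlinarith
    · obtain ⟨hw, hb⟩ := hdn hs hMx
      rw [abs_of_pos (by linarith : (0:ℤ) < x ^ 2 - n),
          abs_of_neg (by nlinarith : y ^ 2 - n < 0)]
      nlinarith

/-- the next k stays below √n -/
lemma sqlem {n K K' x : ℤ} (hns : ¬ IsSquare n) (hK : 0 < K) (hK' : 0 < K')
    (hx : 0 < x) (hKn : K ^ 2 < n) (hv : K * K' = |x ^ 2 - n|)
    (b : IsBest n K x) : K' ^ 2 < n := by
  have key : (K * K') ^ 2 < n * K ^ 2 := by
    rcases lt_or_gt_of_ne (sq_ne hns x) with hs | hs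
    · -- x^2 < n
      have hwu := win_up hns hK hx b
      have hbu := best_beats b (by positivity : (0:ℤ) < x + K) ⟨-1, by ring⟩
      rw [abs_of_neg (by linarith : x ^ 2 - n < 0)] at hv
      rw [abs_of_neg (by linarith : x ^ 2 - n < 0),
          abs_of_pos (by linarith : (0:ℤ) < (x + K) ^ 2 - n)] at hbu
      have hD : K * K' = n - x ^ 2 := by linarith
      rw [hD]
      have hA1 : 2 * (n - x ^ 2) - 2 * x * K - K ^ 2 ≤ 0 := by nlinarith
      have hid : 4 * (n * K ^ 2 - (n - x ^ 2) ^ 2) =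
          K ^ 4 - (2 * (n - x ^ 2) - 2 * x * K - K ^ 2) *
            (2 * (n - x ^ 2) + 2 * x * K - K ^ 2) + 4 * x ^ 2 * K ^ 2 - 4 * x ^ 2 * K ^ 2 := by
        ring
      rcases le_or_gt (2 * (n - x ^ 2) + 2 * x * K) (K ^ 2) with hA | hA
      · have hDpos : 0 < n - x ^ 2 := by linarith
        nlinarith [mul_pos hDpos (mul_pos hx hK), sq_nonneg x, mul_pos hx hK]
      · have h2 : (0:ℤ) ≤ -((2 * (n - x ^ 2) - 2 * x * K - K ^ 2) *
            (2 * (n - x ^ 2) + 2 * x * K - K ^ 2)) := by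
          rw [neg_mul_eq_neg_mul]
          exact mul_nonneg (by linarith) (by linarith)
        nlinarith [pow_pos hK 4]
    · -- n < x^2
      have hxK : K < x := by nlinarith
      have hwd := win_dn hns hK b hxK
      have hbd := best_beats b (by linarith : (0:ℤ) < x - K) ⟨1, by ring⟩
      rw [abs_of_pos (by linarith : (0:ℤ) < x ^ 2 - n)] at hv
      rw [abs_of_pos (by linarith : (0:ℤ) < x ^ 2 - n),
          abs_of_neg (by linarith : (x - K) ^ 2 - n < 0)] at hbd
      rw [hv]
      have h2 : (0:ℤ) ≤ -((2 * (x ^ 2 - n) - 2 * x * K + K ^ 2) *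
          (2 * (x ^ 2 - n) + 2 * x * K + K ^ 2)) := by
        rw [neg_mul_eq_neg_mul]
        refine mul_nonneg (by nlinarith) (by nlinarith)
      nlinarith [pow_pos hK 4]
  nlinarith [sq_nonneg K, mul_pos hK hK']

lemma beatup_ineq {n M N x : ℤ} (hns : ¬ IsSquare n) (hM : 0 < M) (hN : 0 < N)
    (hx : 0 < x) (hs : x ^ 2 < n) (hv : M * N = n - x ^ 2)
    (b : IsBest n M x) : 2 * N ≤ 2 * x + M := by
  have hwu := win_up hns hM hx b
  have hbu := best_beats b (by positivity : (0:ℤ) < x + M) ⟨-1, by ring⟩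
  rw [abs_of_neg (by linarith : x ^ 2 - n < 0),
      abs_of_pos (by linarith : (0:ℤ) < (x + M) ^ 2 - n)] at hbu
  have h2 : M * (2 * N) ≤ M * (2 * x + M) := by nlinarith
  exact le_of_mul_le_mul_left h2 hM

lemma beatdn_ineq {n M N x : ℤ} (hns : ¬ IsSquare n) (hM : 0 < M) (hN : 0 < N)
    (hs : n < x ^ 2) (hMx : M < x) (hv : M * N = x ^ 2 - n)
    (b : IsBest n M x) : 2 * N ≤ 2 * x - M := by
  have hwd := win_dn hns hM b hMx
  have hbd := best_beats b (by linarith : (0:ℤ) < x - M) ⟨1, by ring⟩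
  rw [abs_of_pos (by linarith : (0:ℤ) < x ^ 2 - n),
      abs_of_neg (by linarith : (x - M) ^ 2 - n < 0)] at hbd
  have h2 : M * (2 * N) ≤ M * (2 * x - M) := by nlinarith
  exact le_of_mul_le_mul_left h2 hM

lemma neg_factor {a b : ℤ} (ha : 0 < a) (h : a * b < 0) : b < 0 := by
  by_contra hb
  push_neg at hb
  nlinarith [mul_nonneg ha.le hb]

set_option maxHeartbeats 1000000 in
/-- Core propagation: the semi-reducedness inequality -/
lemma goal_ineq {n K K' K'' x x' : ℤ} (hns : ¬ IsSquare n)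
    (hK : 0 < K) (hK' : 0 < K') (hK'' : 0 < K'') (hx : 0 < x) (hx' : 0 < x')
    (hKn : K ^ 2 < n) (hK'n : K' ^ 2 < n)
    (hv : K * K' = |x ^ 2 - n|) (hv' : K' * K'' = |x' ^ 2 - n|)
    (hd : K' ∣ x + x')
    (bK : IsBest n K x) (bK' : IsBest n K' x) (b' : IsBest n K' x') :
    (x' - K') ^ 2 + K' ^ 2 ≤ n := by
  by_contra hG
  push_neg at hG
  obtain ⟨j, hj⟩ := hd
  have hjpos : 0 < j := by
    by_contra hb
    push_neg at hb
    nlinarith [mul_nonpos_of_nonneg_of_nonpos hK'.le hb]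
  have hxj : x = K' * j - x' := by linarith
  rcases lt_or_gt_of_ne (sq_ne hns x') with hs' | hs'
  · -- σ' = -1 : x'^2 < n
    have hv2 : K' * K'' = n - x' ^ 2 := by
      rw [abs_of_neg (by linarith : x' ^ 2 - n < 0)] at hv'; linarith
    have hF3 : 2 * K'' ≤ 2 * x' + K' := beatup_ineq hns hK' hK'' hx' hs' hv2 b'
    have hA : 2 * x' < 2 * K' - K'' := by
      have h0 : K' * (K'' + 2 * x' - 2 * K') < 0 := by nlinarith
      have := neg_factor hK' h0
      linarith
    have hKK : K'' < K' := by linarith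
    have hx'K : x' < K' := by linarith
    have hw : (2 * K' - x') ^ 2 - n = K' * (4 * K' - 4 * x' - K'') := by
      linear_combination hv2
    have hwpos : 0 < 4 * K' - 4 * x' - K'' := by linarith
    have hwsq : n < (2 * K' - x') ^ 2 := by nlinarith [mul_pos hK' hwpos]
    rcases (by omega : j = 1 ∨ j = 2 ∨ 3 ≤ j) with h1 | h2 | h3
    · -- x = K' - x'
      have hxe : x = K' - x' := by rw [hxj, h1]; ring
      have hxle : x ≤ K' - 1 := by linarith
      have hs : x ^ 2 < n := by nlinarith [mul_le_mul hxle hxle (by linarith) (by linarith)]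
      have hvx : K * K' = n - x ^ 2 := by
        rw [abs_of_neg (by linarith : x ^ 2 - n < 0)] at hv; linarith
      have hKe : K = K'' + 2 * x' - K' := by
        have h0 : K' * K = K' * (K'' + 2 * x' - K') := by
          linear_combination hvx - hv2 - (x + K' - x') * hxe
        exact mul_left_cancel₀ (by positivity) h0
      have := beatup_ineq hns hK hK' hx hs hvx bK
      linarith
    · have hxe : x = 2 * K' - x' := by rw [hxj, h2]; ring
      have hs : n < x ^ 2 := by rw [hxe]; exact hwsq
      have hvx : K * K' = x ^ 2 - n := by
        rw [abs_of_pos (by linarith : (0:ℤ) < x ^ 2 - n)] at hv; linarith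
      have hKe : K = 4 * K' - 4 * x' - K'' := by
        have h0 : K' * K = K' * (4 * K' - 4 * x' - K'') := by
          linear_combination hvx + hv2 + (x + 2 * K' - x') * hxe
        exact mul_left_cancel₀ (by positivity) h0
      rcases le_or_gt x K with hxK | hxK
      · nlinarith [mul_le_mul hxK hxK (by linarith) (by linarith)]
      · have := beatdn_ineq hns hK hK' hs hxK hvx bK
        linarith
    · -- j ≥ 3 : window violation mod K'
      have h1 : 2 * K' - x' ≤ x - K' := by
        have h0 : 0 ≤ K' * (j - 3) := mul_nonneg hK'.le (by linarith)
        nlinarith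
      have hxK' : K' < x := by linarith
      have hwd := win_dn hns hK' bK' hxK'
      have h2 : (2 * K' - x') ^ 2 ≤ (x - K') ^ 2 :=
        pow_le_pow_left₀ (by linarith) h1 2
      linarith
  · -- σ' = +1 : n < x'^2
    have hv2 : K' * K'' = x' ^ 2 - n := by
      rw [abs_of_pos (by linarith : (0:ℤ) < x' ^ 2 - n)] at hv'; linarith
    have hx'K : K' < x' := by
      by_contra hb
      push_neg at hb
      nlinarith [mul_le_mul hb hb (by linarith) (by linarith)]
    have hF3 : 2 * K'' ≤ 2 * x' - K' := beatdn_ineq hns hK' hK'' hs' hx'K hv2 b'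
    have hA : 2 * x' < 2 * K' + K'' := by
      have h0 : K' * (2 * x' - 2 * K' - K'') < 0 := by nlinarith
      have := neg_factor hK' h0
      linarith
    have hKK : K'' < K' := by linarith
    rcases (by omega : j = 1 ∨ j = 2 ∨ j = 3 ∨ j = 4 ∨ 5 ≤ j) with h1 | h2 | h3 | h4 | h5
    · rw [h1] at hxj; nlinarith
    · have hxe : x = 2 * K' - x' := by rw [hxj, h2]; ring
      have hxle : x ≤ K' - 1 := by linarith
      have hs : x ^ 2 < n := by nlinarith [mul_le_mul hxle hxle (by linarith) (by linarith)]
      have hvx : K * K' = n - x ^ 2 := by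
        rw [abs_of_neg (by linarith : x ^ 2 - n < 0)] at hv; linarith
      have hKe : K = 4 * x' - 4 * K' - K'' := by
        have h0 : K' * K = K' * (4 * x' - 4 * K' - K'') := by
          linear_combination hvx + hv2 - (x + 2 * K' - x') * hxe
        exact mul_left_cancel₀ (by positivity) h0
      have := beatup_ineq hns hK hK' hx hs hvx bK
      linarith
    · have hxe : x = 3 * K' - x' := by rw [hxj, h3]; ring
      rcases lt_or_gt_of_ne (sq_ne hns x) with hs | hs
      · have hvx : K * K' = n - x ^ 2 := by
          rw [abs_of_neg (by linarith : x ^ 2 - n < 0)] at hv; linarith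
        have hKe : K = 6 * x' - 9 * K' - K'' := by
          have h0 : K' * K = K' * (6 * x' - 9 * K' - K'') := by
            linear_combination hvx + hv2 - (x + 3 * K' - x') * hxe
          exact mul_left_cancel₀ (by positivity) h0
        have := beatup_ineq hns hK hK' hx hs hvx bK
        linarith
      · have hvx : K * K' = x ^ 2 - n := by
          rw [abs_of_pos (by linarith : (0:ℤ) < x ^ 2 - n)] at hv; linarith
        have hKe : K = 9 * K' - 6 * x' + K'' := by
          have h0 : K' * K = K' * (9 * K' - 6 * x' + K'') := by
            linear_combination hvx - hv2 + (x + 3 * K' - x') * hxe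
          exact mul_left_cancel₀ (by positivity) h0
        have hxK' : K' < x := by linarith
        have hvx' : K' * K = x ^ 2 - n := by linear_combination hvx
        have := beatdn_ineq hns hK' hK hs hxK' hvx' bK'
        linarith
    · have hxe : x = 4 * K' - x' := by rw [hxj, h4]; ring
      have hKe0 : x ^ 2 - n = K' * (16 * K' - 8 * x' + K'') := by
        linear_combination -hv2 + (x + 4 * K' - x') * hxe
      have hspos : 0 < 16 * K' - 8 * x' + K'' := by linarith
      have hs : n < x ^ 2 := by nlinarith [mul_pos hK' hspos]
      have hvx' : K' * K = x ^ 2 - n := by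
        have hvx : K * K' = x ^ 2 - n := by
          rw [abs_of_pos (by linarith : (0:ℤ) < x ^ 2 - n)] at hv; linarith
        linear_combination hvx
      have hKe : K = 16 * K' - 8 * x' + K'' := by
        have h0 : K' * K = K' * (16 * K' - 8 * x' + K'') := by
          linear_combination hvx' + hKe0
        exact mul_left_cancel₀ (by positivity) h0
      have hxK' : K' < x := by linarith
      have := beatdn_ineq hns hK' hK hs hxK' hvx' bK'
      linarith
    · -- j ≥ 5 : window violation mod K'
      have hq : x' + 1 ≤ 4 * K' - x' := by linarith
      have hqsq : n < (4 * K' - x') ^ 2 := by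
        have h0 : (x' + 1) ^ 2 ≤ (4 * K' - x') ^ 2 :=
          pow_le_pow_left₀ (by linarith) hq 2
        nlinarith
      have h1 : 4 * K' - x' ≤ x - K' := by
        have h0 : 0 ≤ K' * (j - 5) := mul_nonneg hK'.le (by linarith)
        nlinarith
      have hxK' : K' < x := by linarith
      have hwd := win_dn hns hK' bK' hxK'
      have h2 : (4 * K' - x') ^ 2 ≤ (x - K') ^ 2 :=
        pow_le_pow_left₀ (by linarith) h1 2
      linarith

/-- two-sided bestness propagates -/
lemma step {n K K' K'' x x' : ℤ} (hns : ¬ IsSquare n)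
    (hK : 0 < K) (hK' : 0 < K') (hK'' : 0 < K'') (hx : 0 < x) (hx' : 0 < x')
    (hKn : K ^ 2 < n) (hK'n : K' ^ 2 < n)
    (hG : (x' - K') ^ 2 + K' ^ 2 ≤ n)
    (hv' : K' * K'' = |x' ^ 2 - n|) :
    IsBest n K'' x' := by
  have hx'2 := sq_ne hns x'
  apply mkbest hns hK'' hx'
  · -- n < (x'+K'')^2
    rcases lt_or_gt_of_ne hx'2 with hs | hs
    · have hv2 : K' * K'' = n - x' ^ 2 := by
        rw [abs_of_neg (by linarith : x' ^ 2 - n < 0)] at hv'; linarith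
      -- from hG : K'' ≥ 2K' - 2x'  i.e. 2x'+K'' ≥ 2K'
      have h1 : K' * K'' ≥ K' * (2 * K' - 2 * x') := by nlinarith
      have h2 : 2 * K' - 2 * x' ≤ K'' := le_of_mul_le_mul_left (by linarith) hK'
      nlinarith [mul_pos hK' hK'']
    · nlinarith
  · intro hs
    have hv2 : K' * K'' = n - x' ^ 2 := by
      rw [abs_of_neg (by linarith : x' ^ 2 - n < 0)] at hv'; linarith
    have h1 : K' * K'' ≥ K' * (2 * K' - 2 * x') := by nlinarith
    have h2 : 2 * K' - 2 * x' ≤ K'' := le_of_mul_le_mul_left (by linarith) hK'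
    nlinarith
  · intro hs hKx
    have hv2 : K' * K'' = x' ^ 2 - n := by
      rw [abs_of_pos (by linarith : (0:ℤ) < x' ^ 2 - n)] at hv'; linarith
    have h1 : K' * K'' ≤ K' * (2 * x' - 2 * K') := by nlinarith
    have h2 : K'' ≤ 2 * x' - 2 * K' := le_of_mul_le_mul_left (by linarith) hK'
    constructor
    · nlinarith [mul_pos hK' hK'']
    · nlinarith

def Meas (v s t : ℕ) : ℕ := 4 * (v * v + 2 * v + s) + t

lemma measle {v' s' t' v s t : ℕ} (hs' : s' ≤ v') (ht' : t' ≤ 3)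
    (h : v' < v ∨ (v' = v ∧ s' < s) ∨ (v' = v ∧ s' = s ∧ t' < t)) :
    Meas v' s' t' < Meas v s t := by
  unfold Meas
  rcases h with h | ⟨rfl, h⟩ | ⟨rfl, rfl, h⟩
  · nlinarith
  · omega
  · omega

lemma ne_of_twin {a b M : ℤ} (hM : 0 < M) (h : a - b = M ∨ b - a = M) : a ≠ b := by
  intro e
  rcases h with h | h <;> rw [e, sub_self] at h <;> exact absurd h.symm (ne_of_gt hM)

lemma walk (n : ℤ) (k m : ℕ → ℤ) (hns : ¬ IsSquare n)
    (hkpos : ∀ i, 0 < k i) (hmpos : ∀ i, 0 < m i) (hk0 : k 0 = 1)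
    (hbest : ∀ i, IsBest n (k i) (m i))
    (inv2 : ∀ i, IsBest n (k (i + 1)) (m i))
    (hrec : ∀ i, k i * k (i + 1) = |m i ^ 2 - n|)
    (hsum : ∀ i, k (i + 1) ∣ m (i + 1) + m i) :
    ∀ μ : ℕ,
      (∀ a b : ℕ, a < b → m a = m b → k a = k b →
        Meas (a + b) a 2 ≤ μ → ∃ i, 1 ≤ i ∧ k i = 1) ∧
      (∀ p q : ℕ, m p = m (q + 1) → k (p + 1) = k (q + 1) →
        Meas (p + q + 1) q 1 ≤ μ → ∃ i, 1 ≤ i ∧ k i = 1) ∧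
      (∀ c e : ℕ, m c + m e = 2 * k c → k c = k (e + 1) → k (c + 1) = k e →
        (m c - m e = k (c + 1) ∨ m e - m c = k (c + 1)) →
        Meas (c + e) c 0 ≤ μ → ∃ i, 1 ≤ i ∧ k i = 1) ∧
      (∀ c e : ℕ, m c + m e = 2 * k c → k c = k e → k (c + 1) = k (e + 1) →
        m c ≠ m e → Meas (c + e) c 0 ≤ μ → ∃ i, 1 ≤ i ∧ k i = 1) ∧
      (∀ e : ℕ, m e + m (e + 1) = 2 * k (e + 1) → k (e + 2) = k e →
        (m (e + 1) - m e = k e ∨ m e - m (e + 1) = k e) →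
        Meas (2 * e + 1) e 0 ≤ μ → ∃ i, 1 ≤ i ∧ k i = 1) := by
  intro μ
  induction μ using Nat.strong_induction_on with
  | _ μ IH =>
  refine ⟨?_, ?_, ?_, ?_, ?_⟩
  -- ============ D config ============
  · intro a b hab hm hk hμ
    by_cases ha : a = 0
    · subst ha; exact ⟨b, by omega, by rw [← hk, hk0]⟩
    obtain ⟨a', rfl⟩ : ∃ t, a = t + 1 := ⟨a - 1, by omega⟩
    obtain ⟨b', rfl⟩ : ∃ t, b = t + 1 := ⟨b - 1, by omega⟩
    have hab' : a' < b' := by omega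
    have hdvd : k (a' + 1) ∣ m a' - m b' := by
      have h2 : k (a' + 1) ∣ m (b' + 1) + m b' := by rw [hk]; exact hsum b'
      have h3 := dvd_sub (hsum a') h2
      have h4 : m (a' + 1) + m a' - (m (b' + 1) + m b') = m a' - m b' := by
        linear_combination hm
      rwa [h4] at h3
    have hbw : IsBest n (k (a' + 1)) (m b') := by rw [hk]; exact inv2 b'
    obtain ⟨veq, hcase⟩ := comp hns (hkpos _) (hmpos a') (hmpos b') hdvd
      (inv2 a') hbw
    have hkk : k a' = k b' := by
      have h0 : k a' * k (a' + 1) = k b' * k (a' + 1) := by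
        linear_combination (hrec a') - (hrec b') + veq - (k b') * hk
      exact mul_right_cancel₀ (ne_of_gt (hkpos (a' + 1))) h0
    rcases hcase with heq | ⟨hdiff, hsum2⟩
    · exact (IH (Meas (a' + b') a' 2)
        (lt_of_lt_of_le (measle (by omega) (by omega) (by omega)) hμ)).1
        a' b' hab' heq hkk le_rfl
    · have hne : m a' ≠ m b' := ne_of_twin (hkpos _) hdiff
      have hsum3 : m a' + m b' = 2 * k a' := by
        have h0 : k (a' + 1) * (m a' + m b') = k (a' + 1) * (2 * k a') := by
          linear_combination hsum2 - 2 * (hrec a')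
        exact mul_left_cancel₀ (ne_of_gt (hkpos _)) h0
      exact (IH (Meas (a' + b') a' 0)
        (lt_of_lt_of_le (measle (by omega) (by omega) (by omega)) hμ)).2.2.2.1
        a' b' hsum3 hkk hk hne le_rfl
  -- ============ C config ============
  · intro p q hm hk hμ
    have hdvd : k (p + 1) ∣ m (p + 1) - m q := by
      have h2 : k (p + 1) ∣ m (q + 1) + m q := by rw [hk]; exact hsum q
      have h3 := dvd_sub (hsum p) h2
      have h4 : m (p + 1) + m p - (m (q + 1) + m q) = m (p + 1) - m q := by
        linear_combination hm
      rwa [h4] at h3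
    have hbw : IsBest n (k (p + 1)) (m q) := by rw [hk]; exact inv2 q
    obtain ⟨veq, hcase⟩ := comp hns (hkpos _) (hmpos (p + 1)) (hmpos q) hdvd
      (hbest (p + 1)) hbw
    have hkk : k (p + 1 + 1) = k q := by
      have h0 : k (p + 1 + 1) * k (p + 1) = k q * k (p + 1) := by
        linear_combination (hrec (p + 1)) - (hrec q) + veq - (k q) * hk
      exact mul_right_cancel₀ (ne_of_gt (hkpos (p + 1))) h0
    by_cases hq : q = 0
    · subst hq; exact ⟨p + 2, by omega, by rw [show p + 2 = p + 1 + 1 from rfl, hkk, hk0]⟩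
    obtain ⟨q', rfl⟩ : ∃ t, q = t + 1 := ⟨q - 1, by omega⟩
    rcases hcase with heq | ⟨hdiff, hsum2⟩
    · exact (IH (Meas (p + 1 + q' + 1) q' 1)
        (lt_of_lt_of_le (measle (by omega) (by omega) (by omega)) hμ)).2.1
        (p + 1) q' heq hkk le_rfl
    · have hsum3 : m (q' + 1) + m (p + 1) = 2 * k (q' + 1) := by
        have h0 : k (p + 1) * (m (p + 1) + m (q' + 1)) =
            k (p + 1) * (2 * k (q' + 1)) := by
          linear_combination hsum2 - 2 * (hrec (p + 1)) + 2 * (k (p + 1)) * hkk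
        have := mul_left_cancel₀ (ne_of_gt (hkpos (p + 1))) h0
        linarith
      have hdiff' : m (q' + 1) - m (p + 1) = k (q' + 1 + 1) ∨
          m (p + 1) - m (q' + 1) = k (q' + 1 + 1) := by
        rcases hdiff with h | h
        · right; rw [← hk]; exact h
        · left; rw [← hk]; exact h
      exact (IH (Meas (q' + 1 + (p + 1)) (q' + 1) 0)
        (lt_of_lt_of_le (measle (by omega) (by omega) (by omega)) hμ)).2.2.1
        (q' + 1) (p + 1) hsum3 hkk.symm hk.symm hdiff' le_rfl
  -- ============ T config ============
  · intro c e hsum2 hk1 hk2 hdiff hμ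
    by_cases he : e = 0
    · subst he; exact ⟨c + 1, by omega, by rw [hk2, hk0]⟩
    obtain ⟨e', rfl⟩ : ∃ t, e = t + 1 := ⟨e - 1, by omega⟩
    by_cases hc : c = 0
    · subst hc; exact ⟨e' + 1 + 1, by omega, by rw [← hk1, hk0]⟩
    obtain ⟨c', rfl⟩ : ∃ t, c = t + 1 := ⟨c - 1, by omega⟩
    by_cases hce : c' = e' + 1
    · -- ODD case
      subst hce
      have hO1 : m (e' + 1) + m (e' + 1 + 1) = 2 * k (e' + 1 + 1) := by linarith
      have hO2 : k (e' + 1 + 2) = k (e' + 1) := hk2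
      have hO3 : m (e' + 1 + 1) - m (e' + 1) = k (e' + 1) ∨
          m (e' + 1) - m (e' + 1 + 1) = k (e' + 1) := by
        rcases hdiff with h | h
        · left; rw [← hO2]; exact h
        · right; rw [← hO2]; exact h
      exact (IH (Meas (2 * (e' + 1) + 1) (e' + 1) 0)
        (lt_of_lt_of_le (measle (by omega) (by omega) (by omega)) hμ)).2.2.2.2
        (e' + 1) hO1 hO2 hO3 le_rfl
    · have hdvd : k (c' + 1) ∣ m c' - m (e' + 1) := by
        have h2 : k (c' + 1) ∣ m (c' + 1) + m (e' + 1) := by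
          rw [show m (c' + 1) + m (e' + 1) = 2 * k (c' + 1) from hsum2]
          exact ⟨2, by ring⟩
        have h3 := dvd_sub (hsum c') h2
        have h4 : m (c' + 1) + m c' - (m (c' + 1) + m (e' + 1)) =
            m c' - m (e' + 1) := by ring
        rwa [h4] at h3
      have hbw : IsBest n (k (c' + 1)) (m (e' + 1)) := by rw [hk1]; exact inv2 (e' + 1)
      obtain ⟨veq, hcase⟩ := comp hns (hkpos _) (hmpos c') (hmpos (e' + 1)) hdvd
        (inv2 c') hbw
      have hkk : k c' = k (e' + 1) := by
        have h0 : k c' * k (c' + 1) = k (e' + 1) * k (c' + 1) := by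
          linear_combination (hrec c') - (hrec (e' + 1)) + veq - (k (e' + 1)) * hk1
        exact mul_right_cancel₀ (ne_of_gt (hkpos (c' + 1))) h0
      rcases hcase with heq | ⟨hdiff2, hsum4⟩
      · rcases Nat.lt_or_ge c' (e' + 1) with ho | ho
        · exact (IH (Meas (c' + (e' + 1)) c' 2)
            (lt_of_lt_of_le (measle (by omega) (by omega) (by omega)) hμ)).1
            c' (e' + 1) ho heq hkk le_rfl
        · have ho' : e' + 1 < c' := by omega
          exact (IH (Meas (e' + 1 + c') (e' + 1) 2)
            (lt_of_lt_of_le (measle (by omega) (by omega) (by omega)) hμ)).1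
            (e' + 1) c' ho' heq.symm hkk.symm le_rfl
      · have hne : m c' ≠ m (e' + 1) := ne_of_twin (hkpos _) hdiff2
        have hsum3 : m c' + m (e' + 1) = 2 * k c' := by
          have h0 : k (c' + 1) * (m c' + m (e' + 1)) = k (c' + 1) * (2 * k c') := by
            linear_combination hsum4 - 2 * (hrec c')
          exact mul_left_cancel₀ (ne_of_gt (hkpos _)) h0
        exact (IH (Meas (c' + (e' + 1)) c' 0)
          (lt_of_lt_of_le (measle (by omega) (by omega) (by omega)) hμ)).2.2.2.1
          c' (e' + 1) hsum3 hkk hk1 hne le_rfl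
  -- ============ T' config ============
  · intro c e hsum2 hk1 hk2 hne hμ
    by_cases hc : c = 0
    · subst hc
      exfalso
      rw [hk0] at hsum2
      have h1 := hmpos 0
      have h2 := hmpos e
      have e1 : m 0 = 1 := by linarith
      have e2 : m e = 1 := by linarith
      exact hne (by rw [e1, e2])
    obtain ⟨c', rfl⟩ : ∃ t, c = t + 1 := ⟨c - 1, by omega⟩
    by_cases he : e = 0
    · subst he; exact ⟨c' + 1, by omega, by rw [hk1, hk0]⟩
    obtain ⟨e', rfl⟩ : ∃ t, e = t + 1 := ⟨e - 1, by omega⟩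
    have hdvd : k (c' + 1) ∣ m c' - m (e' + 1) := by
      have h2 : k (c' + 1) ∣ m (c' + 1) + m (e' + 1) := by
        rw [show m (c' + 1) + m (e' + 1) = 2 * k (c' + 1) from hsum2]
        exact ⟨2, by ring⟩
      have h3 := dvd_sub (hsum c') h2
      have h4 : m (c' + 1) + m c' - (m (c' + 1) + m (e' + 1)) =
          m c' - m (e' + 1) := by ring
      rwa [h4] at h3
    have hbw : IsBest n (k (c' + 1)) (m (e' + 1)) := by rw [hk1]; exact hbest (e' + 1)
    obtain ⟨veq, hcase⟩ := comp hns (hkpos _) (hmpos c') (hmpos (e' + 1)) hdvd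
      (inv2 c') hbw
    have hkk : k c' = k (e' + 1 + 1) := by
      have h0 : k c' * k (c' + 1) = k (e' + 1 + 1) * k (c' + 1) := by
        linear_combination (hrec c') - (hrec (e' + 1)) + veq - (k (e' + 1 + 1)) * hk1
      exact mul_right_cancel₀ (ne_of_gt (hkpos (c' + 1))) h0
    rcases hcase with heq | ⟨hdiff2, hsum4⟩
    · exact (IH (Meas (c' + e' + 1) e' 1)
        (lt_of_lt_of_le (measle (by omega) (by omega) (by omega)) hμ)).2.1
        c' e' heq hk1 le_rfl
    · have hsum3 : m c' + m (e' + 1) = 2 * k c' := by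
        have h0 : k (c' + 1) * (m c' + m (e' + 1)) = k (c' + 1) * (2 * k c') := by
          linear_combination hsum4 - 2 * (hrec c')
        exact mul_left_cancel₀ (ne_of_gt (hkpos _)) h0
      exact (IH (Meas (c' + (e' + 1)) c' 0)
        (lt_of_lt_of_le (measle (by omega) (by omega) (by omega)) hμ)).2.2.1
        c' (e' + 1) hsum3 hkk hk1 hdiff2 le_rfl
  -- ============ ODD config ============
  · intro e hsum2 hk2 hdiff hμ
    by_cases he : e = 0
    · subst he; exact ⟨2, by omega, by rw [hk2, hk0]⟩
    obtain ⟨e', rfl⟩ : ∃ t, e = t + 1 := ⟨e - 1, by omega⟩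
    have hk2' : k (e' + 3) = k (e' + 1) := hk2
    have hdvd : k (e' + 1) ∣ m (e' + 3) - m e' := by
      have h1' : k (e' + 1) ∣ m (e' + 3) + m (e' + 2) := by
        rw [← hk2']; exact hsum (e' + 2)
      have h2 : k (e' + 1) ∣ m (e' + 2) - m (e' + 1) := by
        rcases hdiff with h | h
        · exact ⟨1, by linarith⟩
        · exact ⟨-1, by linarith⟩
      have h3 := dvd_sub (dvd_sub h1' h2) (hsum e')
      have h4 : m (e' + 3) + m (e' + 2) - (m (e' + 2) - m (e' + 1)) -
          (m (e' + 1) + m e') = m (e' + 3) - m e' := by ring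
      rwa [h4] at h3
    have hbu : IsBest n (k (e' + 1)) (m (e' + 3)) := by
      rw [← hk2']; exact hbest (e' + 3)
    obtain ⟨veq, hcase⟩ := comp hns (hkpos _) (hmpos (e' + 3)) (hmpos e') hdvd
      hbu (inv2 e')
    have hrecA : k (e' + 3) * k (e' + 4) = |m (e' + 3) ^ 2 - n| := hrec (e' + 3)
    have hkk : k (e' + 4) = k e' := by
      have h0 : k (e' + 4) * k (e' + 1) = k e' * k (e' + 1) := by
        linear_combination hrecA - (hrec e') + veq - (k (e' + 4)) * hk2'
      exact mul_right_cancel₀ (ne_of_gt (hkpos (e' + 1))) h0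
    by_cases he' : e' = 0
    · subst he'
      exact ⟨4, by omega, by rw [show (4:ℕ) = 0 + 4 from by omega, hkk, hk0]⟩
    obtain ⟨e'', rfl⟩ : ∃ t, e' = t + 1 := ⟨e' - 1, by omega⟩
    rcases hcase with heq | ⟨hdiff2, hsum4⟩
    · -- C (e''+4, e'')
      have heq' : m (e'' + 4) = m (e'' + 1) := heq
      have hkk' : k (e'' + 4 + 1) = k (e'' + 1) := hkk
      exact (IH (Meas (e'' + 4 + e'' + 1) e'' 1)
        (lt_of_lt_of_le (measle (by omega) (by omega) (by omega)) hμ)).2.1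
        (e'' + 4) e'' heq' hkk' le_rfl
    · -- T (e''+1, e''+4)
      have hsum4' : k (e'' + 2) * (m (e'' + 4) + m (e'' + 1)) =
          2 * |m (e'' + 4) ^ 2 - n| := hsum4
      have hrecA' : k (e'' + 4) * k (e'' + 5) = |m (e'' + 4) ^ 2 - n| := hrecA
      have hkk' : k (e'' + 5) = k (e'' + 1) := hkk
      have hk2'' : k (e'' + 4) = k (e'' + 2) := hk2'
      have hsum3 : m (e'' + 1) + m (e'' + 4) = 2 * k (e'' + 1) := by
        have h0 : k (e'' + 2) * (m (e'' + 4) + m (e'' + 1)) =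
            k (e'' + 2) * (2 * k (e'' + 1)) := by
          linear_combination hsum4' - 2 * hrecA' + 2 * (k (e'' + 4)) * hkk' +
            2 * (k (e'' + 1)) * hk2''
        have := mul_left_cancel₀ (ne_of_gt (hkpos (e'' + 2))) h0
        linarith
      have hT2 : k (e'' + 1) = k (e'' + 4 + 1) := hkk'.symm
      have hT3 : k (e'' + 1 + 1) = k (e'' + 4) := hk2''.symm
      have hT4 : m (e'' + 1) - m (e'' + 4) = k (e'' + 1 + 1) ∨
          m (e'' + 4) - m (e'' + 1) = k (e'' + 1 + 1) := Or.symm hdiff2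
      exact (IH (Meas (e'' + 1 + (e'' + 4)) (e'' + 1) 0)
        (lt_of_lt_of_le (measle (by omega) (by omega) (by omega)) hμ)).2.2.1
        (e'' + 1) (e'' + 4) hsum3 hT2 hT3 hT4 le_rfl

end Chak

/-- Halting property of the chakravala algorithm: no infinite run avoids `k i = 1`.
Here `m (-1) := 0` is encoded by the hypothesis `hcong0`. -/
theorem stmt_13 (n : ℤ) (hn : 0 < n) (hns : ¬ IsSquare n)
    (k m : ℕ → ℤ)
    (hk0 : k 0 = 1)
    (hkpos : ∀ i, 0 < k i)
    (hmpos : ∀ i, 0 < m i)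
    (hcong0 : m 0 ≡ -(0 : ℤ) [ZMOD k 0])
    (hcong : ∀ i, m (i + 1) ≡ -(m i) [ZMOD k (i + 1)])
    (hbest : ∀ i, IsBest n (k i) (m i))
    (hrec : ∀ i, k i * k (i + 1) = |m i ^ 2 - n|) :
    ∃ i, 1 ≤ i ∧ k i = 1 := by
  have hn2 : 2 ≤ n := by
    rcases eq_or_ne n 1 with h | h
    · exact absurd (h ▸ ⟨1, by ring⟩) hns
    · omega
  have hsum : ∀ i, k (i + 1) ∣ m (i + 1) + m i := by
    intro i
    have h1 := Int.ModEq.dvd (hcong i)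
    have h2 : -(m i) - m (i + 1) = -(m (i + 1) + m i) := by ring
    rw [h2] at h1
    exact dvd_neg.mp h1
  have hksq : ∀ i, (k i) ^ 2 < n := by
    intro i
    induction i with
    | zero => rw [hk0]; nlinarith
    | succ j ih =>
      exact Chak.sqlem hns (hkpos j) (hkpos (j + 1)) (hmpos j) ih (hrec j) (hbest j)
  have inv2 : ∀ i, IsBest n (k (i + 1)) (m i) := by
    intro i
    induction i with
    | zero =>
      intro y hy _
      exact hbest 0 y hy (by rw [hk0]; exact Int.modEq_one)
    | succ j ih =>
      have hG := Chak.goal_ineq hns (hkpos j) (hkpos (j + 1)) (hkpos (j + 2))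
        (hmpos j) (hmpos (j + 1)) (hksq j) (hksq (j + 1)) (hrec j) (hrec (j + 1))
        (by have := hsum j; rwa [add_comm (m (j+1)) (m j)] at this) (hbest j) ih (hbest (j + 1))
      exact Chak.step hns (hkpos j) (hkpos (j + 1)) (hkpos (j + 2)) (hmpos j)
        (hmpos (j + 1)) (hksq j) (hksq (j + 1)) hG (hrec (j + 1))
  -- bounds
  have hkb : ∀ i, k i ≤ n := by
    intro i
    nlinarith [hksq i, hkpos i]
  have hmb : ∀ i, m i ≤ 2 * n := by
    intro i
    rcases le_or_gt (m i) (k i) with h | h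
    · linarith [hkb i]
    · have hw := Chak.win_dn hns (hkpos i) (hbest i) h
      nlinarith [hkb i]
  -- pigeonhole
  have hmaps : Set.MapsTo (fun i => (k i, m i)) (Set.univ : Set ℕ)
      (Set.Icc ((1 : ℤ), (1 : ℤ)) ((n : ℤ), (2 * n : ℤ))) := by
    intro i _
    constructor
    · exact ⟨hkpos i, hmpos i⟩
    · exact ⟨hkb i, hmb i⟩
  obtain ⟨a, -, b, -, hne, heq⟩ :=
    Set.infinite_univ.exists_ne_map_eq_of_mapsTo hmaps (Set.finite_Icc _ _)
  have hkm : k a = k b ∧ m a = m b := by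
    have h1 := congrArg Prod.fst heq
    have h2 := congrArg Prod.snd heq
    exact ⟨h1, h2⟩
  rcases Nat.lt_or_ge a b with hab | hab
  · exact (Chak.walk n k m hns hkpos hmpos hk0 hbest inv2 hrec hsum
      (Chak.Meas (a + b) a 2)).1 a b hab hkm.2 hkm.1 le_rfl
  · have hab' : b < a := by omega
    exact (Chak.walk n k m hns hkpos hmpos hk0 hbest inv2 hrec hsum
      (Chak.Meas (b + a) b 2)).1 b a hab' hkm.2.symm hkm.1.symm le_rfl
end

section
/- Let n be a nonsquare positive integer, and let (k_0, m_0, k_1), (k_1, m_1, k_2), …, (k_N, m_N, k_{N+1}) be a finite chain of steps such that k_0 = 1, k_{N+1} = 1, for every 1 ≤ i ≤ N, k_i divides m_{i−1} + m_i, and every m_i (0 ≤ i ≤ N) is strictly best mod k_i. Then the chain is palindromic: k_i = k_{N+1−i} for all 0 ≤ i ≤ N+1, and m_i = m_{N−i} for all 0 ≤ i ≤ N. -/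
lemma sq_ne_aux {n : ℤ} (hns : ¬ IsSquare n) (x : ℤ) : x ^ 2 ≠ n := by
  intro h
  exact hns ⟨x, by rw [← h]; ring⟩

lemma best_of_char {n q x : ℤ} (hns : ¬ IsSquare n) (hq : 0 < q) (hx : 0 < x)
    (h1 : x ^ 2 + (x - q) ^ 2 ≤ 2 * n) (h2 : 2 * n ≤ x ^ 2 + (x + q) ^ 2) :
    IsBest n q x := by
  intro m' hm' hcong
  have hdvd : q ∣ x - m' := Int.ModEq.dvd hcong
  rcases lt_trichotomy m' x with h | h | h
  · obtain ⟨s, hs⟩ := hdvd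
    have hs1 : 1 ≤ s := by
      by_contra hc
      push_neg at hc
      have hs0 : s ≤ 0 := by omega
      have : q * s ≤ 0 := mul_nonpos_of_nonneg_of_nonpos hq.le hs0
      linarith
    have hqs : q * 1 ≤ q * s := mul_le_mul_of_nonneg_left hs1 hq.le
    have hm'le : m' ≤ x - q := by linarith
    have hsq : m' ^ 2 ≤ (x - q) ^ 2 := by nlinarith
    have hxx : m' ^ 2 ≤ x ^ 2 := by nlinarith
    rcases (sq_ne_aux hns m').lt_or_gt with hc | hc
    · have e2 : |m' ^ 2 - n| = n - m' ^ 2 := by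
        rw [abs_of_neg (by linarith)]; ring
      rw [e2, abs_le]
      constructor
      · linarith
      · linarith
    · exfalso; linarith
  · rw [h]
  · obtain ⟨s, hs⟩ := hdvd
    have hs1 : s ≤ -1 := by
      by_contra hc
      push_neg at hc
      have hs0 : 0 ≤ s := by omega
      have : 0 ≤ q * s := mul_nonneg hq.le hs0
      linarith
    have hqs : q * s ≤ q * (-1) := mul_le_mul_of_nonneg_left hs1 hq.le
    have hm'ge : x + q ≤ m' := by linarith
    have hsq : (x + q) ^ 2 ≤ m' ^ 2 := by nlinarith
    have hxx : x ^ 2 ≤ m' ^ 2 := by nlinarith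
    rcases (sq_ne_aux hns m').lt_or_gt with hc | hc
    · exfalso; linarith
    · have e2 : |m' ^ 2 - n| = m' ^ 2 - n := abs_of_pos (by linarith)
      rw [e2, abs_le]
      constructor
      · linarith
      · linarith

lemma char_of_best {n q x : ℤ} (hns : ¬ IsSquare n) (hq : 0 < q) (hqn : q ^ 2 < n)
    (hx : 0 < x) (hb : IsBest n q x) :
    x ^ 2 + (x - q) ^ 2 ≤ 2 * n ∧ 2 * n ≤ x ^ 2 + (x + q) ^ 2 := by
  constructor
  · by_cases hxq : x ≤ q
    · nlinarith [mul_nonneg (sub_nonneg.2 hxq) (by linarith : (0:ℤ) ≤ x - 1)]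
    · push_neg at hxq
      have hcong : (x - q) ≡ x [ZMOD q] := Int.modEq_iff_dvd.mpr ⟨1, by ring⟩
      have hle := hb (x - q) (by linarith) hcong
      rcases (sq_ne_aux hns x).lt_or_gt with hc1 | hc1
      · nlinarith [mul_pos hq (by linarith : (0:ℤ) < 2 * x - q)]
      · rcases (sq_ne_aux hns (x - q)).lt_or_gt with hc2 | hc2
        · have e1 : |x ^ 2 - n| = x ^ 2 - n := abs_of_pos (by linarith)
          have e2 : |(x - q) ^ 2 - n| = n - (x - q) ^ 2 := by
            rw [abs_of_neg (by linarith)]; ring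
          rw [e1, e2] at hle; linarith
        · have e1 : |x ^ 2 - n| = x ^ 2 - n := abs_of_pos (by linarith)
          have e2 : |(x - q) ^ 2 - n| = (x - q) ^ 2 - n := abs_of_pos (by linarith)
          rw [e1, e2] at hle
          exfalso; nlinarith [mul_pos hq (by linarith : (0:ℤ) < 2 * x - q)]
  · have hcong : (x + q) ≡ x [ZMOD q] := Int.modEq_iff_dvd.mpr ⟨-1, by ring⟩
    have hle := hb (x + q) (by linarith) hcong
    rcases (sq_ne_aux hns x).lt_or_gt with hc1 | hc1
    · rcases (sq_ne_aux hns (x + q)).lt_or_gt with hc2 | hc2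
      · have e1 : |x ^ 2 - n| = n - x ^ 2 := by
          rw [abs_of_neg (by linarith)]; ring
        have e2 : |(x + q) ^ 2 - n| = n - (x + q) ^ 2 := by
          rw [abs_of_neg (by linarith)]; ring
        rw [e1, e2] at hle
        exfalso; nlinarith [mul_pos hx hq]
      · have e1 : |x ^ 2 - n| = n - x ^ 2 := by
          rw [abs_of_neg (by linarith)]; ring
        have e2 : |(x + q) ^ 2 - n| = (x + q) ^ 2 - n := abs_of_pos (by linarith)
        rw [e1, e2] at hle; linarith
    · nlinarith [mul_pos hx hq]

set_option maxHeartbeats 1000000 in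
lemma transfer_aux {n k k' k'' m mp : ℤ} (hns : ¬ IsSquare n)
    (hk : 0 < k) (hk' : 0 < k') (hk'' : 0 < k'') (hm : 0 < m) (hmp : 0 < mp)
    (hk'n : k' ^ 2 < n)
    (hd : |m ^ 2 - n| = k * k') (he : |mp ^ 2 - n| = k' * k'')
    (hcong : k' ∣ m + mp)
    (H1a : m ^ 2 + (m - k) ^ 2 ≤ 2 * n) (H1b : 2 * n ≤ m ^ 2 + (m + k) ^ 2)
    (H3a : mp ^ 2 + (mp - k') ^ 2 ≤ 2 * n) (H3b : 2 * n ≤ mp ^ 2 + (mp + k') ^ 2) :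
    mp ^ 2 + (mp - k'') ^ 2 ≤ 2 * n ∧ 2 * n ≤ mp ^ 2 + (mp + k'') ^ 2 := by
  obtain ⟨t, hT⟩ := hcong
  have ht : 1 ≤ t := by
    by_contra hc
    push_neg at hc
    have hs0 : t ≤ 0 := by omega
    have : k' * t ≤ 0 := mul_nonpos_of_nonneg_of_nonpos hk'.le hs0
    linarith
  have h2m : 2 * m = k' * t + (m - mp) := by linarith
  have h2mp : 2 * mp = k' * t - (m - mp) := by linarith
  have key : m ^ 2 - mp ^ 2 = k' * (t * (m - mp)) := by
    rw [show m ^ 2 - mp ^ 2 = (m + mp) * (m - mp) by ring, hT]; ring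
  rcases (sq_ne_aux hns mp).lt_or_gt with hE0 | hE0
  · -- mp^2 < n
    have hE : n - mp ^ 2 = k' * k'' := by
      rw [← he, abs_of_neg (by linarith)]; ring
    have hB : 2 * k'' ≤ 2 * mp + k' := by
      have h9 : k' * (2 * k'') ≤ k' * (2 * mp + k') := by linarith [H3b, hE]
      exact le_of_mul_le_mul_left h9 hk'
    have hA : t * (m - mp) - k'' ≤ 2 * m - 2 * k' := by
      rcases (sq_ne_aux hns m).lt_or_gt with hD0 | hD0
      · have hD : n - m ^ 2 = k * k' := by
          rw [← hd, abs_of_neg (by linarith)]; ring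
        have h5 : k' * (t * (m - mp) + k) = k' * k'' := by linarith [key, hE, hD]
        have h6 : t * (m - mp) + k = k'' := mul_left_cancel₀ (ne_of_gt hk') h5
        have h7 : k * (2 * k') ≤ k * (2 * m + k) := by linarith [H1b, hD]
        have h8 : 2 * k' ≤ 2 * m + k := le_of_mul_le_mul_left h7 hk
        linarith
      · have hD : m ^ 2 - n = k * k' := by
          rw [← hd, abs_of_pos (by linarith)]
        have h5 : k' * (t * (m - mp)) = k' * (k + k'') := by linarith [key, hE, hD]
        have h6 : t * (m - mp) = k + k'' := mul_left_cancel₀ (ne_of_gt hk') h5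
        have h7 : k * (2 * k') ≤ k * (2 * m - k) := by linarith [H1a, hD]
        have h8 : 2 * k' ≤ 2 * m - k := le_of_mul_le_mul_left h7 hk
        linarith
    have hA' : (t - 1) * (m - mp) ≤ (t - 2) * k' + k'' := by linarith [hA, h2m]
    have hG1 : 2 * k' ≤ 2 * mp + k'' := by
      rcases le_or_gt (m - mp) 0 with hu0 | hu0
      · rcases eq_or_lt_of_le ht with ht1 | ht2
        · rw [← ht1] at hA' h2mp
          linarith [hA', h2mp]
        · have hnn : 0 ≤ (t - 2) * k' := mul_nonneg (by linarith) hk'.le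
          linarith [h2mp, hnn]
      · rcases eq_or_lt_of_le ht with ht1 | ht2
        · exfalso
          rw [← ht1] at hA hT
          linarith [hA, hT, hB]
        · have hnn : 0 ≤ (t - 2) * (m - mp) := mul_nonneg (by linarith) (by linarith)
          linarith [hA', h2mp, hnn]
    constructor
    · have h9 : k'' ≤ 2 * mp + 2 * k' := by linarith
      have h10 : k'' * k'' ≤ k'' * (2 * mp + 2 * k') :=
        mul_le_mul_of_nonneg_left h9 hk''.le
      linarith [h10, hE]
    · have h11 : k'' * (2 * k') ≤ k'' * (2 * mp + k'') :=
        mul_le_mul_of_nonneg_left hG1 hk''.le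
      linarith [h11, hE]
  · -- n < mp^2
    have hE : mp ^ 2 - n = k' * k'' := by
      rw [← he, abs_of_pos (by linarith)]
    have hB : 2 * k'' + k' ≤ 2 * mp := by
      have h9 : k' * (2 * k'' + k') ≤ k' * (2 * mp) := by linarith [H3a, hE]
      exact le_of_mul_le_mul_left h9 hk'
    have hmpk' : k' < mp := by
      by_contra hc
      push_neg at hc
      have hsq : mp * mp ≤ k' * k' := mul_le_mul hc hc hmp.le hk'.le
      have h12 : mp ^ 2 ≤ k' ^ 2 := by nlinarith [hsq]
      linarith [mul_pos hk' hk'', hE, hk'n, h12]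
    have ht2 : 2 ≤ t := by
      by_contra hc
      push_neg at hc
      have ht1 : t = 1 := by omega
      rw [ht1, mul_one] at hT
      linarith
    have hA : t * (m - mp) + k'' ≤ 2 * m - 2 * k' := by
      rcases (sq_ne_aux hns m).lt_or_gt with hD0 | hD0
      · have hD : n - m ^ 2 = k * k' := by
          rw [← hd, abs_of_neg (by linarith)]; ring
        have h5 : k' * (t * (m - mp) + k + k'') = k' * 0 := by linarith [key, hE, hD]
        have h6 : t * (m - mp) + k + k'' = 0 := mul_left_cancel₀ (ne_of_gt hk') h5
        have h7 : k * (2 * k') ≤ k * (2 * m + k) := by linarith [H1b, hD]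
        have h8 : 2 * k' ≤ 2 * m + k := le_of_mul_le_mul_left h7 hk
        linarith
      · have hD : m ^ 2 - n = k * k' := by
          rw [← hd, abs_of_pos (by linarith)]
        have h5 : k' * (t * (m - mp) + k'') = k' * k := by linarith [key, hE, hD]
        have h6 : t * (m - mp) + k'' = k := mul_left_cancel₀ (ne_of_gt hk') h5
        have h7 : k * (2 * k') ≤ k * (2 * m - k) := by linarith [H1a, hD]
        have h8 : 2 * k' ≤ 2 * m - k := le_of_mul_le_mul_left h7 hk
        linarith
    have hG : 2 * k' + k'' ≤ 2 * mp := by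
      by_contra hc
      push_neg at hc
      have hKK : k'' < k' := by linarith
      rcases le_or_gt (m - mp) 0 with hu0 | hu0
      · rcases eq_or_lt_of_le ht2 with ht3 | ht3
        · rw [← ht3] at hA h2mp h2m
          linarith [hA, h2mp, h2m, hc]
        · have hnn : 0 ≤ (t - 3) * k' := mul_nonneg (by linarith) hk'.le
          linarith [hA, h2mp, h2m, hnn, hKK, hc, hu0]
      · have hnn : 0 ≤ (t - 2) * (m - mp) := mul_nonneg (by linarith) (by linarith)
        linarith [hA, h2mp, h2m, hnn, hc]
    constructor
    · have h11 : k'' * (2 * k' + k'') ≤ k'' * (2 * mp) :=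
        mul_le_mul_of_nonneg_left hG hk''.le
      linarith [h11, hE]
    · linarith [mul_pos hmp hk'', sq_nonneg k'', hE0]

theorem stmt_14 (n : ℤ) (hn : 0 < n) (hns : ¬ IsSquare n)
    (N : ℕ) (k : ℕ → ℤ) (m : ℕ → ℤ)
    (hchain : ∀ i ≤ N, IsStep n (k i) (m i) (k (i + 1)))
    (hk0 : k 0 = 1) (hkN : k (N + 1) = 1)
    (hdvd : ∀ i, 1 ≤ i → i ≤ N → k i ∣ m (i - 1) + m i)
    (hstrict : ∀ i ≤ N, IsStrictBest n (k i) (m i)) :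
    (∀ i ≤ N + 1, k i = k (N + 1 - i)) ∧ (∀ i ≤ N, m i = m (N - i)) := by
  -- every m j (j ≤ N) is best mod k (j+1)
  have key : ∀ j ≤ N, IsBest n (k (j + 1)) (m j) := by
    intro j hj
    cases j with
    | zero =>
      obtain ⟨_, hm0, hk1, _, _, hb0⟩ := hchain 0 (Nat.zero_le _)
      rw [hk0] at hb0
      intro m' hm' _
      exact hb0 m' hm' Int.modEq_one
    | succ jj =>
      have hjj : jj ≤ N := by omega
      obtain ⟨hkp, hmp, hkp1, hkn, hdp, hbp⟩ := hchain jj hjj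
      obtain ⟨hkq, hmq, hkq1, hkn1, hdq, hbq⟩ := hchain (jj + 1) hj
      have H1 := char_of_best hns hkp hkn hmp hbp
      have H3 := char_of_best hns hkq hkn1 hmq hbq
      have hcg : k (jj + 1) ∣ m jj + m (jj + 1) := by
        have h := hdvd (jj + 1) (by omega) hj
        simpa using h
      have hchar := transfer_aux hns hkp hkq hkq1 hmp hmq hkn1 hdp hdq hcg
        H1.1 H1.2 H3.1 H3.2
      exact best_of_char hns hkq1 hmq hchar.1 hchar.2
  have hmpos : ∀ j ≤ N, 0 < m j := fun j hj => (hchain j hj).2.1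
  have main : ∀ i ≤ N, m i = m (N - i) ∧ k (i + 1) = k (N - i) := by
    intro i
    induction i with
    | zero =>
      intro _
      have hbN : IsBest n (k (N + 1)) (m N) := key N le_rfl
      rw [hkN] at hbN
      have hs0 : IsStrictBest n (k 0) (m 0) := hstrict 0 (Nat.zero_le _)
      rw [hk0] at hs0
      have hm0 : 0 < m 0 := hmpos 0 (Nat.zero_le _)
      have hmN : 0 < m N := hmpos N le_rfl
      have hmeq : m 0 = m N := by
        by_contra hne
        have h1 := hs0 (m N) hmN Int.modEq_one (fun h => hne h.symm)
        have h2 := hbN (m 0) hm0 Int.modEq_one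
        linarith
      have hN0 : N - 0 = N := by omega
      rw [hN0]
      refine ⟨hmeq, ?_⟩
      obtain ⟨_, _, _, _, hd0, _⟩ := hchain 0 (Nat.zero_le _)
      obtain ⟨_, _, _, _, hdN, _⟩ := hchain N le_rfl
      rw [hk0, one_mul] at hd0
      rw [hkN, mul_one] at hdN
      rw [← hd0, hmeq]
      exact hdN
    | succ i ih =>
      intro hi
      obtain ⟨hmi, hki⟩ := ih (by omega)
      obtain ⟨j, hj⟩ : ∃ j, N - i = j + 1 := ⟨N - i - 1, by omega⟩
      have hjN : j ≤ N := by omega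
      have hj1N : j + 1 ≤ N := by omega
      have hbest : IsBest n (k (i + 1)) (m j) := by
        have hb := key j hjN
        rw [← hj, ← hki] at hb
        exact hb
      have hc1 : k (i + 1) ∣ m i + m (i + 1) := by
        have h := hdvd (i + 1) (by omega) hi
        simpa using h
      have hc2 : k (i + 1) ∣ m j + m i := by
        have h := hdvd (j + 1) (by omega) hj1N
        have e1 : j + 1 - 1 = j := by omega
        rw [e1, ← hj, ← hki, ← hmi] at h
        exact h
      have hd1 : k (i + 1) ∣ m (i + 1) - m j := by
        have h3 : m (i + 1) - m j = (m i + m (i + 1)) - (m j + m i) := by ring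
        rw [h3]
        exact dvd_sub hc1 hc2
      have hd2 : k (i + 1) ∣ m j - m (i + 1) := by
        rw [show m j - m (i + 1) = -(m (i + 1) - m j) by ring]
        exact dvd_neg.mpr hd1
      have hmj : 0 < m j := hmpos j hjN
      have hmi1 : 0 < m (i + 1) := hmpos (i + 1) hi
      have hle : |(m j) ^ 2 - n| ≤ |(m (i + 1)) ^ 2 - n| :=
        hbest (m (i + 1)) hmi1 (Int.modEq_iff_dvd.mpr hd2)
      have hmeq : m (i + 1) = m j := by
        by_contra hne
        have hlt := hstrict (i + 1) hi (m j) hmj (Int.modEq_iff_dvd.mpr hd1)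
          (fun h => hne h.symm)
        linarith
      have hNi1 : N - (i + 1) = j := by omega
      rw [hNi1]
      refine ⟨hmeq, ?_⟩
      obtain ⟨hkpi, _, _, _, hdi, _⟩ := hchain (i + 1) hi
      obtain ⟨_, _, _, _, hdj, _⟩ := hchain j hjN
      rw [← hj, ← hki] at hdj
      rw [hmeq, hdj] at hdi
      have hcanc : k (i + 1) * k (i + 1 + 1) = k (i + 1) * k j := by linarith
      exact mul_left_cancel₀ (ne_of_gt hkpi) hcanc
  constructor
  · intro i hi
    cases i with
    | zero =>
      have h0 : N + 1 - 0 = N + 1 := by omega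
      rw [h0, hk0, hkN]
    | succ i' =>
      have hi' : i' ≤ N := by omega
      have h1 : N + 1 - (i' + 1) = N - i' := by omega
      rw [h1]
      exact (main i' hi').2
  · intro i hi
    exact (main i hi).1
end

section
/- Let n be a nonsquare positive integer, and let k, m be positive integers with k² < n and m best mod k. Then either m² < n < (m + k)², or k < m and (m − k)² < n < m². (In other words, a best element mod k is one of the two members of its congruence class nearest to √n.) -/
theorem stmt_15 (n k m : ℤ) (hn : 0 < n) (hns : ¬ IsSquare n)
    (hk : 0 < k) (hm : 0 < m) (hkn : k ^ 2 < n) (hbest : IsBest n k m) :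
    (m ^ 2 < n ∧ n < (m + k) ^ 2) ∨ (k < m ∧ (m - k) ^ 2 < n ∧ n < m ^ 2) := by
  have hne : m ^ 2 ≠ n := by
    intro h
    exact hns ⟨m, by rw [← h]; ring⟩
  rcases lt_or_gt_of_ne hne with h1 | h1
  · left
    refine ⟨h1, ?_⟩
    by_contra hle
    push_neg at hle
    have hcong : (m + k) ≡ m [ZMOD k] := by
      show (m + k) % k = m % k
      simpa using Int.add_mul_emod_self_left (a := m) (b := k) (c := 1)
    have := hbest (m + k) (by linarith) hcong
    rw [abs_of_nonpos (by linarith), abs_of_nonpos (by nlinarith)] at this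
    nlinarith
  · right
    have hkm : k < m := by nlinarith
    refine ⟨hkm, ?_, h1⟩
    by_contra hle
    push_neg at hle
    have hcong : (m - k) ≡ m [ZMOD k] := by
      show (m - k) % k = m % k
      simpa [sub_eq_add_neg] using Int.add_mul_emod_self_left (a := m) (b := k) (c := -1)
    have := hbest (m - k) (by linarith) hcong
    rw [abs_of_nonneg (by linarith), abs_of_nonneg (by linarith)] at this
    nlinarith
end

section
/- Let n be a positive integer and let a, b, m be integers and k a positive integer such that k = |a² − n·b²|, k divides a + m·b, and k divides m² − n. Set b' = (a + m·b)/k and a' = (a·m + n·b)/k (an integer). Then |a·b' − b·a'| = 1 (so in particular a' and b' are coprime), and k²·(a'² − n·b'²) = (m² − n)·(a² − n·b²), so that |a'² − n·b'²| = |m² − n|/k. -/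
theorem stmt_17 (n a b m k a' b' : ℤ) (hn : 0 < n) (hk : 0 < k)
    (hkdef : k = |a ^ 2 - n * b ^ 2|)
    (h1 : k ∣ a + m * b) (h2 : k ∣ m ^ 2 - n)
    (hb' : k * b' = a + m * b) (ha' : k * a' = a * m + n * b) :
    |a * b' - b * a'| = 1 ∧ IsCoprime a' b' ∧
    k ^ 2 * (a' ^ 2 - n * b' ^ 2) = (m ^ 2 - n) * (a ^ 2 - n * b ^ 2) ∧
    k * |a' ^ 2 - n * b' ^ 2| = |m ^ 2 - n| := by
  have hk0 : k ≠ 0 := hk.ne'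
  have hdet : k * (a * b' - b * a') = a ^ 2 - n * b ^ 2 := by
    have : k * (a * b' - b * a') = a * (k * b') - b * (k * a') := by ring
    rw [this, hb', ha']; ring
  have habs : |a * b' - b * a'| = 1 := by
    have h := congrArg abs hdet
    rw [abs_mul, ← hkdef, abs_of_pos hk] at h
    exact mul_left_cancel₀ hk0 (by linarith)
  have hcop : IsCoprime a' b' := by
    rcases abs_eq (by norm_num : (0:ℤ) ≤ 1) |>.mp habs with h | h
    · exact ⟨-b, a, by linarith⟩
    · exact ⟨b, -a, by linarith⟩
  have h3 : k ^ 2 * (a' ^ 2 - n * b' ^ 2) = (m ^ 2 - n) * (a ^ 2 - n * b ^ 2) := by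
    have : k ^ 2 * (a' ^ 2 - n * b' ^ 2) = (k * a') ^ 2 - n * (k * b') ^ 2 := by ring
    rw [this, hb', ha']; ring
  refine ⟨habs, hcop, h3, ?_⟩
  have h4 := congrArg abs h3
  rw [abs_mul, abs_mul, ← hkdef, abs_pow, abs_of_pos hk] at h4
  have : k * (k * |a' ^ 2 - n * b' ^ 2|) = k * |m ^ 2 - n| := by
    rw [← mul_assoc, ← sq, h4]; ring
  exact mul_left_cancel₀ hk0 this
end
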